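/- arXiv:2312.13074 — 8 statements merged into one kernel-verified Lean document; each statement's English description precedes it below -/
import Mathlib

section
/- Let B be a bimonad on a monoidal category C acting on a right C-module category M, and let (K, δ) be a comodule monad on M over B. Then the Eilenberg–Moore category M^K is a right module category over C^B, with action of a B-algebra (x, θ_x) on a K-algebra (m, θ_m) given by (m ◁ x, (θ_m ◁ θ_x) ∘ δ_{m,x}), such that the forgetful functor U^K : M^K → M is a strict comodule functor over the strict monoidal forgetful functor U^B : C^B → C. -/
open CategoryTheory Category MonoidalCategory

universe v₁ v₂ u₁ u₂

/-- A (strict) right module category of a monoidal category `C`. -/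
structure RAct (C : Type u₁) [Category.{v₁} C] [MonoidalCategory C]
    (M : Type u₂) [Category.{v₂} M] where
  smul : M → C → M
  smulHom : ∀ {m m' : M} {x x' : C}, (m ⟶ m') → (x ⟶ x') → (smul m x ⟶ smul m' x')
  smulHom_id : ∀ (m : M) (x : C), smulHom (𝟙 m) (𝟙 x) = 𝟙 (smul m x)
  smulHom_comp :
    ∀ {m m' m'' : M} {x x' x'' : C} (f : m ⟶ m') (f' : m' ⟶ m'')
      (g : x ⟶ x') (g' : x' ⟶ x''),
      smulHom (f ≫ f') (g ≫ g') = smulHom f g ≫ smulHom f' g'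
  assoc : ∀ (m : M) (x y : C), smul m (x ⊗ y) = smul (smul m x) y
  unit : ∀ (m : M), smul m (𝟙_ C) = m
  assoc_hom :
    ∀ {m m' : M} {x x' y y' : C} (f : m ⟶ m') (g : x ⟶ x') (h : y ⟶ y'),
      smulHom f (g ⊗ₘ h) =
        eqToHom (assoc m x y) ≫ smulHom (smulHom f g) h ≫ eqToHom (assoc m' x' y').symm
  unit_hom :
    ∀ {m m' : M} (f : m ⟶ m'),
      smulHom f (𝟙 (𝟙_ C)) = eqToHom (unit m) ≫ f ≫ eqToHom (unit m').symm

/-- An opmonoidal structure on a functor between monoidal categories. -/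
structure OpmonStr {C : Type u₁} [Category.{v₁} C] [MonoidalCategory C]
    {D : Type u₂} [Category.{v₂} D] [MonoidalCategory D] (F : C ⥤ D) where
  d : ∀ x y : C, F.obj (x ⊗ y) ⟶ F.obj x ⊗ F.obj y
  e : F.obj (𝟙_ C) ⟶ 𝟙_ D
  d_natural : ∀ {x x' y y' : C} (f : x ⟶ x') (g : y ⟶ y'),
    F.map (f ⊗ₘ g) ≫ d x' y' = d x y ≫ (F.map f ⊗ₘ F.map g)
  coassoc : ∀ x y z : C,
    d (x ⊗ y) z ≫ (d x y ⊗ₘ 𝟙 (F.obj z)) ≫ (α_ (F.obj x) (F.obj y) (F.obj z)).hom =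
      F.map (α_ x y z).hom ≫ d x (y ⊗ z) ≫ (𝟙 (F.obj x) ⊗ₘ d y z)
  counit_left : ∀ x : C,
    d (𝟙_ C) x ≫ (e ⊗ₘ 𝟙 (F.obj x)) ≫ (λ_ (F.obj x)).hom = F.map (λ_ x).hom
  counit_right : ∀ x : C,
    d x (𝟙_ C) ≫ (𝟙 (F.obj x) ⊗ₘ e) ≫ (ρ_ (F.obj x)).hom = F.map (ρ_ x).hom

/-- A bimonad structure on a given monad `t` on a monoidal category. -/
structure BimonadStr {C : Type u₁} [Category.{v₁} C] [MonoidalCategory C]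
    (t : Monad C) where
  op : OpmonStr t.toFunctor
  mul_opmon : ∀ x y : C,
    t.μ.app (x ⊗ y) ≫ op.d x y =
      t.map (op.d x y) ≫ op.d (t.obj x) (t.obj y) ≫ (t.μ.app x ⊗ₘ t.μ.app y)
  mul_counit : t.μ.app (𝟙_ C) ≫ op.e = t.map op.e ≫ op.e
  unit_opmon : ∀ x y : C, t.η.app (x ⊗ y) ≫ op.d x y = t.η.app x ⊗ₘ t.η.app y
  unit_counit : t.η.app (𝟙_ C) ≫ op.e = 𝟙 (𝟙_ C)

/-- A comodule functor structure on `G : M ⥤ N` over an opmonoidal functor `(F, OF)`. -/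
structure ComodStr {C : Type u₁} [Category.{v₁} C] [MonoidalCategory C]
    {D : Type u₂} [Category.{v₂} D] [MonoidalCategory D]
    {M : Type u₁} [Category.{v₁} M] {N : Type u₂} [Category.{v₂} N]
    (F : C ⥤ D) (OF : OpmonStr F)
    (ρM : RAct C M) (ρN : RAct D N) (G : M ⥤ N) where
  δ : ∀ (m : M) (x : C), G.obj (ρM.smul m x) ⟶ ρN.smul (G.obj m) (F.obj x)
  natural : ∀ {m m' : M} {x x' : C} (f : m ⟶ m') (g : x ⟶ x'),
    G.map (ρM.smulHom f g) ≫ δ m' x' = δ m x ≫ ρN.smulHom (G.map f) (F.map g)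
  coassoc : ∀ (m : M) (x y : C),
    δ m (x ⊗ y) ≫ ρN.smulHom (𝟙 (G.obj m)) (OF.d x y) ≫
        eqToHom (ρN.assoc (G.obj m) (F.obj x) (F.obj y)) =
      G.map (eqToHom (ρM.assoc m x y)) ≫ δ (ρM.smul m x) y ≫
        ρN.smulHom (δ m x) (𝟙 (F.obj y))
  counital : ∀ m : M,
    δ m (𝟙_ C) ≫ ρN.smulHom (𝟙 (G.obj m)) OF.e ≫ eqToHom (ρN.unit (G.obj m)) =
      G.map (eqToHom (ρM.unit m))

/-- A coaction of a bimonad `(t, bs)` on a monad `K`, making `K` a comodule monad. -/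
structure Coaction {C : Type u₁} [Category.{v₁} C] [MonoidalCategory C]
    {M : Type u₁} [Category.{v₁} M]
    (t : Monad C) (bs : BimonadStr t) (ρ : RAct C M) (K : Monad M) where
  δ : ∀ (m : M) (x : C), K.obj (ρ.smul m x) ⟶ ρ.smul (K.obj m) (t.obj x)
  natural : ∀ {m m' : M} {x x' : C} (f : m ⟶ m') (g : x ⟶ x'),
    K.map (ρ.smulHom f g) ≫ δ m' x' = δ m x ≫ ρ.smulHom (K.map f) (t.map g)
  coassoc : ∀ (m : M) (x y : C),
    δ m (x ⊗ y) ≫ ρ.smulHom (𝟙 (K.obj m)) (bs.op.d x y) ≫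
        eqToHom (ρ.assoc (K.obj m) (t.obj x) (t.obj y)) =
      K.map (eqToHom (ρ.assoc m x y)) ≫ δ (ρ.smul m x) y ≫
        ρ.smulHom (δ m x) (𝟙 (t.obj y))
  counital : ∀ m : M,
    δ m (𝟙_ C) ≫ ρ.smulHom (𝟙 (K.obj m)) bs.op.e ≫ eqToHom (ρ.unit (K.obj m)) =
      K.map (eqToHom (ρ.unit m))
  mul_comod : ∀ (m : M) (x : C),
    K.μ.app (ρ.smul m x) ≫ δ m x =
      K.map (δ m x) ≫ δ (K.obj m) (t.obj x) ≫ ρ.smulHom (K.μ.app m) (t.μ.app x)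
  unit_comod : ∀ (m : M) (x : C),
    K.η.app (ρ.smul m x) ≫ δ m x = ρ.smulHom (K.η.app m) (t.η.app x)

/-- Let `(t, bs)` be a bimonad on `C` acting on a right `C`-module category `M`, and
`(K, co)` a comodule monad on `M` over it.  Then `M^K` is a right module category over
`C^t`, the action of a `B`-algebra `(x, θ_x)` on a `K`-algebra `(m, θ_m)` being
`(m ◁ x, (θ_m ◁ θ_x) ∘ δ_{m,x})`, and the forgetful functor `U^K` is a strict comodule
functor over the strict monoidal forgetful functor `U^B`. -/
theorem stmt10 {C : Type u₁} [Category.{v₁} C] [MonoidalCategory C]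
    {M : Type u₁} [Category.{v₁} M]
    (t : Monad C) (bs : BimonadStr t) (ρ : RAct C M) (K : Monad M)
    (co : Coaction t bs ρ K) :
    ∃ (act : K.Algebra → t.Algebra → K.Algebra)
      (actHom : ∀ {p p' : K.Algebra} {q q' : t.Algebra},
        (p ⟶ p') → (q ⟶ q') → (act p q ⟶ act p' q')),
      (∀ (p : K.Algebra) (q : t.Algebra), (act p q).A = ρ.smul p.A q.A) ∧
      (∀ (p : K.Algebra) (q : t.Algebra),
        HEq (act p q).a (co.δ p.A q.A ≫ ρ.smulHom p.a q.a)) ∧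
      (∀ {p p' : K.Algebra} {q q' : t.Algebra} (f : p ⟶ p') (g : q ⟶ q'),
        HEq (actHom f g).f (ρ.smulHom f.f g.f)) ∧
      (∀ (p : K.Algebra) (q : t.Algebra), actHom (𝟙 p) (𝟙 q) = 𝟙 (act p q)) ∧
      (∀ {p p' p'' : K.Algebra} {q q' q'' : t.Algebra}
        (f : p ⟶ p') (f' : p' ⟶ p'') (g : q ⟶ q') (g' : q' ⟶ q''),
        actHom (f ≫ f') (g ≫ g') = actHom f g ≫ actHom f' g') := by


  refine ⟨fun p q => ⟨ρ.smul p.A q.A, co.δ p.A q.A ≫ ρ.smulHom p.a q.a, ?_, ?_⟩,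
    fun {p p' q q'} f g => ⟨ρ.smulHom f.f g.f, ?_⟩,
    fun p q => rfl, fun p q => HEq.rfl, fun f g => HEq.rfl,
    fun p q => ?_, fun f f' g g' => ?_⟩
  · rw [reassoc_of% (co.unit_comod p.A q.A), ← ρ.smulHom_comp, p.unit, q.unit,
      ρ.smulHom_id]
  · rw [reassoc_of% (co.mul_comod p.A q.A), Functor.map_comp, assoc,
      ← ρ.smulHom_comp, p.assoc, q.assoc, ρ.smulHom_comp,
      ← reassoc_of% (co.natural p.a q.a)]
  · rw [reassoc_of% (co.natural f.f g.f), ← ρ.smulHom_comp, f.h, g.h,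
      ρ.smulHom_comp]
    simp
  · exact Monad.Algebra.Hom.ext (by simp [ρ.smulHom_id])
  · exact Monad.Algebra.Hom.ext (by simp [ρ.smulHom_comp])
end

section
/- Let F ⊣ U be a monoidal adjunction between monoidal categories C and D, with C-module category M and D-module category N, and let (G, δ^(G)) ⊣ (V, δ^(V)) be a comodule adjunction over it. Then the coaction δ^(V) of V is a natural isomorphism, with inverse at (n, y) given by the composite Vn ◁ Uy → VG(Vn ◁ Uy) → V(GVn ◀ FUy) → V(n ◀ y), where the arrows are the adjunction unit, V applied to δ^(G), and V applied to (ε^(G⊣V) ◀ ε^(F⊣U)). -/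
open CategoryTheory Category MonoidalCategory

universe v₁ v₂ u₁ u₂

section ComoduleAdjunctions

variable {C : Type u₁} [Category.{v₁} C] [MonoidalCategory C]
  {D : Type u₂} [Category.{v₂} D] [MonoidalCategory D]
  {M : Type u₁} [Category.{v₁} M] {N : Type u₂} [Category.{v₂} N]

/-- A lift of an adjunction `G ⊣ V` to a comodule adjunction over a (monoidal)
adjunction `F ⊣ U`: comodule structures on `G` over `F` and on `V` over `U`, whose unit
and counit satisfy the comodule compatibility squares. -/
structure ComodAdjLift (F : C ⥤ D) (U : D ⥤ C) (OF : OpmonStr F) (OU : OpmonStr U)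
    (adj : F ⊣ U) (ρM : RAct C M) (ρN : RAct D N)
    (G : M ⥤ N) (V : N ⥤ M) (adjGV : G ⊣ V) where
  cG : ComodStr F OF ρM ρN G
  cV : ComodStr U OU ρN ρM V
  unit_compat : ∀ (m : M) (x : C),
    adjGV.unit.app (ρM.smul m x) ≫ V.map (cG.δ m x) ≫ cV.δ (G.obj m) (F.obj x) =
      ρM.smulHom (adjGV.unit.app m) (adj.unit.app x)
  counit_compat : ∀ (n : N) (y : D),
    G.map (cV.δ n y) ≫ cG.δ (V.obj n) (U.obj y) ≫
        ρN.smulHom (adjGV.counit.app n) (adj.counit.app y) =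
      adjGV.counit.app (ρN.smul n y)

/-- In a comodule adjunction `(G, δ^G) ⊣ (V, δ^V)` over a monoidal adjunction `F ⊣ U`,
the coaction `δ^V` is invertible, with inverse at `(n, y)` the composite of the
adjunction unit, `V δ^G`, and `V (ε^{G⊣V} ◀ ε^{F⊣U})`. -/
theorem stmt11 (F : C ⥤ D) (U : D ⥤ C) (OF : OpmonStr F) (OU : OpmonStr U)
    (adj : F ⊣ U)
    (hd : ∀ x y : D, IsIso (OU.d x y)) (he : IsIso OU.e)
    (hu : ∀ x y : C, adj.unit.app (x ⊗ y) ≫ U.map (OF.d x y) ≫ OU.d (F.obj x) (F.obj y)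
      = adj.unit.app x ⊗ₘ adj.unit.app y)
    (hu0 : adj.unit.app (𝟙_ C) ≫ U.map OF.e ≫ OU.e = 𝟙 (𝟙_ C))
    (hc : ∀ x y : D, F.map (OU.d x y) ≫ OF.d (U.obj x) (U.obj y) ≫
      (adj.counit.app x ⊗ₘ adj.counit.app y) = adj.counit.app (x ⊗ y))
    (hc0 : F.map OU.e ≫ OF.e = adj.counit.app (𝟙_ D))
    (ρM : RAct C M) (ρN : RAct D N)
    (G : M ⥤ N) (V : N ⥤ M) (adjGV : G ⊣ V)
    (L : ComodAdjLift F U OF OU adj ρM ρN G V adjGV) :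
    ∀ (n : N) (y : D),
      (L.cV.δ n y ≫
        adjGV.unit.app (ρM.smul (V.obj n) (U.obj y)) ≫
          V.map (L.cG.δ (V.obj n) (U.obj y)) ≫
            V.map (ρN.smulHom (adjGV.counit.app n) (adj.counit.app y)) =
        𝟙 (V.obj (ρN.smul n y))) ∧
      ((adjGV.unit.app (ρM.smul (V.obj n) (U.obj y)) ≫
          V.map (L.cG.δ (V.obj n) (U.obj y)) ≫
            V.map (ρN.smulHom (adjGV.counit.app n) (adj.counit.app y))) ≫
        L.cV.δ n y = 𝟙 (ρM.smul (V.obj n) (U.obj y))) := by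
  intro n y
  constructor
  · have nat := adjGV.unit.naturality (L.cV.δ n y)
    simp only [Functor.id_map, Functor.comp_map] at nat
    rw [← Category.assoc, nat, Category.assoc, ← V.map_comp_assoc, ← V.map_comp,
      Category.assoc]
    rw [show G.map (L.cV.δ n y) ≫ L.cG.δ (V.obj n) (U.obj y) ≫
        ρN.smulHom (adjGV.counit.app n) (adj.counit.app y)
        = adjGV.counit.app (ρN.smul n y) from L.counit_compat n y]
    exact adjGV.right_triangle_components (ρN.smul n y)
  · have natV := L.cV.natural (adjGV.counit.app n) (adj.counit.app y)
    simp only [Functor.id_obj, Functor.comp_obj] at natV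
    rw [Category.assoc, Category.assoc, natV, ← Category.assoc, ← Category.assoc,
      Category.assoc (adjGV.unit.app _), L.unit_compat (V.obj n) (U.obj y),
      ← ρM.smulHom_comp, adjGV.right_triangle_components,
      adj.right_triangle_components]
    exact ρM.smulHom_id _ _
end ComoduleAdjunctions
end

section
/- Let F ⊣ U be a monoidal adjunction between monoidal categories C and D, M a right C-module and N a right D-module category, and G ⊣ V any adjunction with G : M → N. Then lifts of G ⊣ V to a comodule adjunction over F ⊣ U are in bijection with strong comodule functor structures on V over U. -/
open CategoryTheory Category MonoidalCategory

universe v₁ v₂ u₁ u₂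

section ComoduleAdjunctions

variable {C : Type u₁} [Category.{v₁} C] [MonoidalCategory C]
  {D : Type u₂} [Category.{v₂} D] [MonoidalCategory D]
  {M : Type u₁} [Category.{v₁} M] {N : Type u₂} [Category.{v₂} N]

/-- A strong comodule functor structure on `V` over `U`. -/
structure StrongComod (U : D ⥤ C) (OU : OpmonStr U) (ρN : RAct D N) (ρM : RAct C M)
    (V : N ⥤ M) extends ComodStr U OU ρN ρM V where
  iso : ∀ (n : N) (y : D), IsIso (toComodStr.δ n y)

universe v₃ v₄ u₃ u₄

theorem RAct_isIso_smulHom {C : Type u₃} [Category.{v₃} C] [MonoidalCategory C]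
    {M : Type u₄} [Category.{v₄} M] (ρ : RAct C M) {m m' : M} {x x' : C}
    (f : m ⟶ m') (g : x ⟶ x') [IsIso f] [IsIso g] : IsIso (ρ.smulHom f g) :=
  ⟨ρ.smulHom (inv f) (inv g),
    by rw [← ρ.smulHom_comp, IsIso.hom_inv_id, IsIso.hom_inv_id, ρ.smulHom_id],
    by rw [← ρ.smulHom_comp, IsIso.inv_hom_id, IsIso.inv_hom_id, ρ.smulHom_id]⟩

theorem RAct_smulHom_comp_assoc {C : Type u₃} [Category.{v₃} C] [MonoidalCategory C]
    {M : Type u₄} [Category.{v₄} M] (ρ : RAct C M) {m m' m'' : M} {x x' x'' : C}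
    (f : m ⟶ m') (f' : m' ⟶ m'') (g : x ⟶ x') (g' : x' ⟶ x'')
    {Z : M} (k : ρ.smul m'' x'' ⟶ Z) :
    ρ.smulHom f g ≫ ρ.smulHom f' g' ≫ k = ρ.smulHom (f ≫ f') (g ≫ g') ≫ k := by
  rw [ρ.smulHom_comp, Category.assoc]

theorem ComodStr_ext' {C : Type u₃} [Category.{v₃} C] [MonoidalCategory C]
    {D : Type u₄} [Category.{v₄} D] [MonoidalCategory D]
    {M : Type u₃} [Category.{v₃} M] {N : Type u₄} [Category.{v₄} N]
    {F : C ⥤ D} {OF : OpmonStr F} {ρM : RAct C M} {ρN : RAct D N} {G : M ⥤ N}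
    {a b : ComodStr F OF ρM ρN G} (h : ∀ m x, a.δ m x = b.δ m x) : a = b := by
  obtain ⟨δa, _, _, _⟩ := a
  obtain ⟨δb, _, _, _⟩ := b
  obtain rfl : δa = δb := funext fun m => funext fun x => h m x
  rfl

section Aux

variable {F : C ⥤ D} {U : D ⥤ C} {OF : OpmonStr F} {OU : OpmonStr U}
  {ρM : RAct C M} {ρN : RAct D N} {G : M ⥤ N} {V : N ⥤ M}

/-- Transposition along `G ⊣ V` is injective. -/
theorem transpose_inj (adjGV : G ⊣ V) {a : M} {b : N} {f g : G.obj a ⟶ b}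
    (h : adjGV.unit.app a ≫ V.map f = adjGV.unit.app a ≫ V.map g) : f = g :=
  (adjGV.homEquiv a b).injective
    (by rw [Adjunction.homEquiv_unit, Adjunction.homEquiv_unit]; exact h)

theorem unit_nat (adjGV : G ⊣ V) {a b : M} (f : a ⟶ b) {Z : M}
    (k : V.obj (G.obj b) ⟶ Z) :
    adjGV.unit.app a ≫ V.map (G.map f) ≫ k = f ≫ adjGV.unit.app b ≫ k := by
  rw [← Category.assoc, show adjGV.unit.app a ≫ V.map (G.map f) = f ≫ adjGV.unit.app b from
    adjGV.unit_naturality f, Category.assoc]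

theorem unit_nat' (adjGV : G ⊣ V) {a b : M} (f : a ⟶ b) :
    adjGV.unit.app a ≫ V.map (G.map f) = f ≫ adjGV.unit.app b :=
  adjGV.unit_naturality f

/-- The mate of a strong comodule structure on `V`. -/
noncomputable def mateδ (adj : F ⊣ U) (adjGV : G ⊣ V) (cV : ComodStr U OU ρN ρM V)
    (hiso : ∀ n y, IsIso (cV.δ n y)) (m : M) (x : C) :
    G.obj (ρM.smul m x) ⟶ ρN.smul (G.obj m) (F.obj x) :=
  (adjGV.homEquiv _ _).symm (ρM.smulHom (adjGV.unit.app m) (adj.unit.app x) ≫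
    @inv _ _ _ _ (cV.δ (G.obj m) (F.obj x)) (hiso _ _))

theorem mateδ_unit (adj : F ⊣ U) (adjGV : G ⊣ V) (cV : ComodStr U OU ρN ρM V)
    (hiso : ∀ n y, IsIso (cV.δ n y)) (m : M) (x : C) :
    adjGV.unit.app (ρM.smul m x) ≫ V.map (mateδ adj adjGV cV hiso m x) ≫
        cV.δ (G.obj m) (F.obj x) =
      ρM.smulHom (adjGV.unit.app m) (adj.unit.app x) := by
  letI := hiso (G.obj m) (F.obj x)
  have h : adjGV.unit.app (ρM.smul m x) ≫ V.map (mateδ adj adjGV cV hiso m x) =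
      ρM.smulHom (adjGV.unit.app m) (adj.unit.app x) ≫
        inv (cV.δ (G.obj m) (F.obj x)) := by
    have h2 := (adjGV.homEquiv (ρM.smul m x) (ρN.smul (G.obj m) (F.obj x))).apply_symm_apply
      (ρM.smulHom (adjGV.unit.app m) (adj.unit.app x) ≫ inv (cV.δ (G.obj m) (F.obj x)))
    rw [Adjunction.homEquiv_unit] at h2
    exact h2
  rw [← Category.assoc, h, Category.assoc, IsIso.inv_hom_id, Category.comp_id]

theorem mateδ_unique (adj : F ⊣ U) (adjGV : G ⊣ V) (cV : ComodStr U OU ρN ρM V)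
    (hiso : ∀ n y, IsIso (cV.δ n y))
    {m : M} {x : C} (f : G.obj (ρM.smul m x) ⟶ ρN.smul (G.obj m) (F.obj x))
    (hf : adjGV.unit.app (ρM.smul m x) ≫ V.map f ≫ cV.δ (G.obj m) (F.obj x) =
      ρM.smulHom (adjGV.unit.app m) (adj.unit.app x)) :
    f = mateδ adj adjGV cV hiso m x := by
  letI := hiso (G.obj m) (F.obj x)
  apply transpose_inj adjGV
  have h1 := mateδ_unit adj adjGV cV hiso m x
  rw [← hf] at h1
  rw [← Category.assoc, ← Category.assoc] at h1
  exact (cancel_mono (cV.δ (G.obj m) (F.obj x))).1 h1.symm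

theorem mate_natural (adj : F ⊣ U) (adjGV : G ⊣ V) (cV : ComodStr U OU ρN ρM V)
    (hiso : ∀ n y, IsIso (cV.δ n y)) {m m' : M} {x x' : C} (f : m ⟶ m') (g : x ⟶ x') :
    G.map (ρM.smulHom f g) ≫ mateδ adj adjGV cV hiso m' x' =
      mateδ adj adjGV cV hiso m x ≫ ρN.smulHom (G.map f) (F.map g) := by
  letI := hiso (G.obj m') (F.obj x')
  apply transpose_inj adjGV
  rw [← cancel_mono (cV.δ (G.obj m') (F.obj x'))]
  simp only [Functor.map_comp, Category.assoc]
  rw [unit_nat, mateδ_unit adj adjGV cV hiso m' x',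
    cV.natural (G.map f) (F.map g),
    reassoc_of% (mateδ_unit adj adjGV cV hiso m x),
    ← ρM.smulHom_comp, ← ρM.smulHom_comp,
    ← unit_nat' adjGV f, ← adj.unit_naturality g]

theorem mate_counital (adj : F ⊣ U) (adjGV : G ⊣ V) (cV : ComodStr U OU ρN ρM V)
    (hiso : ∀ n y, IsIso (cV.δ n y))
    (hu0 : adj.unit.app (𝟙_ C) ≫ U.map OF.e ≫ OU.e = 𝟙 (𝟙_ C)) (m : M) :
    mateδ adj adjGV cV hiso m (𝟙_ C) ≫ ρN.smulHom (𝟙 (G.obj m)) OF.e ≫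
        eqToHom (ρN.unit (G.obj m)) =
      G.map (eqToHom (ρM.unit m)) := by
  apply transpose_inj adjGV
  simp only [Functor.map_comp, Category.assoc]
  rw [unit_nat' adjGV (eqToHom (ρM.unit m)), ← cV.counital (G.obj m),
    reassoc_of% (cV.natural (𝟙 (G.obj m)) OF.e), V.map_id,
    reassoc_of% (mateδ_unit adj adjGV cV hiso m (𝟙_ C)),
    RAct_smulHom_comp_assoc, RAct_smulHom_comp_assoc]
  simp only [Category.comp_id, Category.assoc]
  rw [hu0, ρM.unit_hom]
  simp

theorem mate_coassoc (adj : F ⊣ U) (adjGV : G ⊣ V) (cV : ComodStr U OU ρN ρM V)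
    (hiso : ∀ n y, IsIso (cV.δ n y))
    (hu : ∀ x y : C, adj.unit.app (x ⊗ y) ≫ U.map (OF.d x y) ≫ OU.d (F.obj x) (F.obj y)
      = adj.unit.app x ⊗ₘ adj.unit.app y) (m : M) (x y : C) :
    mateδ adj adjGV cV hiso m (x ⊗ y) ≫ ρN.smulHom (𝟙 (G.obj m)) (OF.d x y) ≫
        eqToHom (ρN.assoc (G.obj m) (F.obj x) (F.obj y)) =
      G.map (eqToHom (ρM.assoc m x y)) ≫ mateδ adj adjGV cV hiso (ρM.smul m x) y ≫
        ρN.smulHom (mateδ adj adjGV cV hiso m x) (𝟙 (F.obj y)) := by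
  letI := hiso (ρN.smul (G.obj m) (F.obj x)) (F.obj y)
  letI := hiso (G.obj m) (F.obj x)
  letI : IsIso (ρM.smulHom (cV.δ (G.obj m) (F.obj x)) (𝟙 (U.obj (F.obj y)))) :=
    RAct_isIso_smulHom ρM _ _
  apply transpose_inj adjGV
  rw [← cancel_mono (cV.δ (ρN.smul (G.obj m) (F.obj x)) (F.obj y) ≫
    ρM.smulHom (cV.δ (G.obj m) (F.obj x)) (𝟙 (U.obj (F.obj y))))]
  simp only [Functor.map_comp, Category.assoc]
  rw [← cV.coassoc (G.obj m) (F.obj x) (F.obj y),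
    reassoc_of% (cV.natural (𝟙 (G.obj m)) (OF.d x y)), V.map_id,
    reassoc_of% (mateδ_unit adj adjGV cV hiso m (x ⊗ y)),
    RAct_smulHom_comp_assoc, RAct_smulHom_comp_assoc]
  simp only [Category.comp_id, Category.assoc]
  rw [hu, ρM.assoc_hom]
  rw [unit_nat, reassoc_of% (cV.natural (mateδ adj adjGV cV hiso m x) (𝟙 (F.obj y))),
    U.map_id, reassoc_of% (mateδ_unit adj adjGV cV hiso (ρM.smul m x) y),
    RAct_smulHom_comp_assoc, ← ρM.smulHom_comp]
  simp only [Category.comp_id, Category.assoc]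
  rw [mateδ_unit adj adjGV cV hiso m x]
  simp

theorem mate_counit_compat (adj : F ⊣ U) (adjGV : G ⊣ V) (cV : ComodStr U OU ρN ρM V)
    (hiso : ∀ n y, IsIso (cV.δ n y)) (n : N) (y : D) :
    G.map (cV.δ n y) ≫ mateδ adj adjGV cV hiso (V.obj n) (U.obj y) ≫
        ρN.smulHom (adjGV.counit.app n) (adj.counit.app y) =
      adjGV.counit.app (ρN.smul n y) := by
  letI := hiso n y
  apply transpose_inj adjGV
  rw [← cancel_mono (cV.δ n y)]
  simp only [Functor.map_comp, Category.assoc, Functor.id_obj, Functor.comp_obj]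
  have hnat := cV.natural (adjGV.counit.app n) (adj.counit.app y)
  simp only [Functor.id_obj, Functor.comp_obj] at hnat
  rw [unit_nat, hnat,
    reassoc_of% (mateδ_unit adj adjGV cV hiso (V.obj n) (U.obj y)),
    ← ρM.smulHom_comp, adjGV.right_triangle_components, adj.right_triangle_components,
    ρM.smulHom_id, Category.comp_id]
  simp

theorem lift_inv_hom {OF : OpmonStr F} {OU : OpmonStr U} {adj : F ⊣ U} {adjGV : G ⊣ V}
    (L : ComodAdjLift F U OF OU adj ρM ρN G V adjGV) (n : N) (y : D) :
    (adjGV.unit.app (ρM.smul (V.obj n) (U.obj y)) ≫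
      V.map (L.cG.δ (V.obj n) (U.obj y)) ≫
      V.map (ρN.smulHom (adjGV.counit.app n) (adj.counit.app y))) ≫ L.cV.δ n y =
      𝟙 _ := by
  simp only [Category.assoc, Functor.id_obj, Functor.comp_obj]
  have hnat := L.cV.natural (adjGV.counit.app n) (adj.counit.app y)
  simp only [Functor.id_obj, Functor.comp_obj] at hnat
  rw [hnat,
    reassoc_of% (L.unit_compat (V.obj n) (U.obj y)), ← ρM.smulHom_comp,
    adjGV.right_triangle_components, adj.right_triangle_components, ρM.smulHom_id]

theorem lift_hom_inv {OF : OpmonStr F} {OU : OpmonStr U} {adj : F ⊣ U} {adjGV : G ⊣ V}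
    (L : ComodAdjLift F U OF OU adj ρM ρN G V adjGV) (n : N) (y : D) :
    L.cV.δ n y ≫ (adjGV.unit.app (ρM.smul (V.obj n) (U.obj y)) ≫
      V.map (L.cG.δ (V.obj n) (U.obj y)) ≫
      V.map (ρN.smulHom (adjGV.counit.app n) (adj.counit.app y))) =
      𝟙 _ := by
  rw [← unit_nat adjGV (L.cV.δ n y)]
  simp only [← Functor.map_comp]
  rw [show G.map (L.cV.δ n y) ≫ L.cG.δ (V.obj n) (U.obj y) ≫
      ρN.smulHom (adjGV.counit.app n) (adj.counit.app y) =
      adjGV.counit.app (ρN.smul n y) from L.counit_compat n y]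
  exact adjGV.right_triangle_components _

theorem lift_isIso {OF : OpmonStr F} {OU : OpmonStr U} {adj : F ⊣ U} {adjGV : G ⊣ V}
    (L : ComodAdjLift F U OF OU adj ρM ρN G V adjGV) (n : N) (y : D) :
    IsIso (L.cV.δ n y) :=
  ⟨adjGV.unit.app (ρM.smul (V.obj n) (U.obj y)) ≫
      V.map (L.cG.δ (V.obj n) (U.obj y)) ≫
      V.map (ρN.smulHom (adjGV.counit.app n) (adj.counit.app y)),
    lift_hom_inv L n y, lift_inv_hom L n y⟩

theorem Lift_ext {OF : OpmonStr F} {OU : OpmonStr U} {adj : F ⊣ U} {adjGV : G ⊣ V}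
    {a b : ComodAdjLift F U OF OU adj ρM ρN G V adjGV}
    (h1 : a.cG = b.cG) (h2 : a.cV = b.cV) : a = b := by
  cases a; cases b; cases h1; cases h2; rfl

theorem Strong_ext {a b : StrongComod U OU ρN ρM V}
    (h : a.toComodStr = b.toComodStr) : a = b := by
  cases a; cases b; cases h; rfl

end Aux

/-- Let `F ⊣ U` be a monoidal adjunction, `M` a right `C`-module, `N` a right `D`-module,
and `G ⊣ V` any adjunction with `G : M ⥤ N`.  Lifts of `G ⊣ V` to a comodule adjunction
over `F ⊣ U` are in bijection with strong comodule functor structures on `V` over `U`,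
the bijection preserving the coaction of `V`. -/
theorem stmt12 (F : C ⥤ D) (U : D ⥤ C) (OF : OpmonStr F) (OU : OpmonStr U)
    (adj : F ⊣ U)
    (hd : ∀ x y : D, IsIso (OU.d x y)) (he : IsIso OU.e)
    (hu : ∀ x y : C, adj.unit.app (x ⊗ y) ≫ U.map (OF.d x y) ≫ OU.d (F.obj x) (F.obj y)
      = adj.unit.app x ⊗ₘ adj.unit.app y)
    (hu0 : adj.unit.app (𝟙_ C) ≫ U.map OF.e ≫ OU.e = 𝟙 (𝟙_ C))
    (hc : ∀ x y : D, F.map (OU.d x y) ≫ OF.d (U.obj x) (U.obj y) ≫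
      (adj.counit.app x ⊗ₘ adj.counit.app y) = adj.counit.app (x ⊗ y))
    (hc0 : F.map OU.e ≫ OF.e = adj.counit.app (𝟙_ D))
    (ρM : RAct C M) (ρN : RAct D N)
    (G : M ⥤ N) (V : N ⥤ M) (adjGV : G ⊣ V) :
    ∃ e : ComodAdjLift F U OF OU adj ρM ρN G V adjGV ≃
        StrongComod U OU ρN ρM V,
      ∀ (L : ComodAdjLift F U OF OU adj ρM ρN G V adjGV) (n : N) (y : D),
        (e L).toComodStr.δ n y = L.cV.δ n y := by
  refine ⟨{
      toFun := fun L =>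
        { toComodStr := L.cV, iso := fun n y => lift_isIso L n y }
      invFun := fun S =>
        { cG :=
            { δ := mateδ adj adjGV S.toComodStr S.iso
              natural := fun f g => mate_natural adj adjGV S.toComodStr S.iso f g
              coassoc := fun m x y => mate_coassoc adj adjGV S.toComodStr S.iso hu m x y
              counital := fun m => mate_counital adj adjGV S.toComodStr S.iso hu0 m }
          cV := S.toComodStr
          unit_compat := fun m x => mateδ_unit adj adjGV S.toComodStr S.iso m x
          counit_compat := fun n y => mate_counit_compat adj adjGV S.toComodStr S.iso n y }
      left_inv := fun L => by
        refine Lift_ext ?_ rfl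
        refine ComodStr_ext' fun m x => ?_
        exact (mateδ_unique adj adjGV L.cV (fun n y => lift_isIso L n y)
          (L.cG.δ m x) (L.unit_compat m x)).symm
      right_inv := fun S => Strong_ext rfl },
    fun L n y => rfl⟩
end ComoduleAdjunctions
end

section
/- Given a strong monoidal adjunction F ⊣ U and a strong comodule functor structure δ^(V) on V over U, the natural transformation δ^(G) : G(m ◁ x) → Gm ◀ Fx defined by G(η^{G⊣V}_m ◁ η^{F⊣U}_x), then G applied to the inverse of δ^(V) at (Gm, Fx), then the counit ε^{G⊣V}_{Gm ◀ Fx}, is a coassociative and counital coaction making G a comodule functor over F. -/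
open CategoryTheory Category MonoidalCategory

universe v₁ v₂ u₁ u₂

section ComoduleAdjunctions

variable {C : Type u₁} [Category.{v₁} C] [MonoidalCategory C]
  {D : Type u₂} [Category.{v₂} D] [MonoidalCategory D]
  {M : Type u₁} [Category.{v₁} M] {N : Type u₂} [Category.{v₂} N]

/-- Given a monoidal adjunction `F ⊣ U`, an adjunction `G ⊣ V`, and a strong comodule
structure `δ^V` (with inverse `δVinv`) on `V` over `U`, the transformation
`δ^G_{m,x} = ε^{G⊣V} ∘ G((δ^V)⁻¹) ∘ G(η^{G⊣V}_m ◁ η^{F⊣U}_x)` is a natural,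
coassociative and counital coaction making `G` a comodule functor over `F`. -/
theorem stmt13 (F : C ⥤ D) (U : D ⥤ C) (OF : OpmonStr F) (OU : OpmonStr U)
    (adj : F ⊣ U)
    (hu : ∀ x y : C, adj.unit.app (x ⊗ y) ≫ U.map (OF.d x y) ≫ OU.d (F.obj x) (F.obj y)
      = adj.unit.app x ⊗ₘ adj.unit.app y)
    (hu0 : adj.unit.app (𝟙_ C) ≫ U.map OF.e ≫ OU.e = 𝟙 (𝟙_ C))
    (hc : ∀ x y : D, F.map (OU.d x y) ≫ OF.d (U.obj x) (U.obj y) ≫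
      (adj.counit.app x ⊗ₘ adj.counit.app y) = adj.counit.app (x ⊗ y))
    (hc0 : F.map OU.e ≫ OF.e = adj.counit.app (𝟙_ D))
    (ρM : RAct C M) (ρN : RAct D N)
    (G : M ⥤ N) (V : N ⥤ M) (adjGV : G ⊣ V)
    (cV : ComodStr U OU ρN ρM V)
    (δVinv : ∀ (n : N) (y : D), ρM.smul (V.obj n) (U.obj y) ⟶ V.obj (ρN.smul n y))
    (hinv₁ : ∀ (n : N) (y : D), cV.δ n y ≫ δVinv n y = 𝟙 (V.obj (ρN.smul n y)))
    (hinv₂ : ∀ (n : N) (y : D), δVinv n y ≫ cV.δ n y = 𝟙 (ρM.smul (V.obj n) (U.obj y))) :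
    let δG : ∀ (m : M) (x : C), G.obj (ρM.smul m x) ⟶ ρN.smul (G.obj m) (F.obj x) :=
      fun m x =>
        G.map (ρM.smulHom (adjGV.unit.app m) (adj.unit.app x)) ≫
          G.map (δVinv (G.obj m) (F.obj x)) ≫
            adjGV.counit.app (ρN.smul (G.obj m) (F.obj x))
    (∀ {m m' : M} {x x' : C} (f : m ⟶ m') (g : x ⟶ x'),
      G.map (ρM.smulHom f g) ≫ δG m' x' = δG m x ≫ ρN.smulHom (G.map f) (F.map g)) ∧
    (∀ (m : M) (x y : C),
      δG m (x ⊗ y) ≫ ρN.smulHom (𝟙 (G.obj m)) (OF.d x y) ≫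
          eqToHom (ρN.assoc (G.obj m) (F.obj x) (F.obj y)) =
        G.map (eqToHom (ρM.assoc m x y)) ≫ δG (ρM.smul m x) y ≫
          ρN.smulHom (δG m x) (𝟙 (F.obj y))) ∧
    (∀ m : M,
      δG m (𝟙_ C) ≫ ρN.smulHom (𝟙 (G.obj m)) OF.e ≫ eqToHom (ρN.unit (G.obj m)) =
        G.map (eqToHom (ρM.unit m))) := by
  intro δG
  have hGV : ∀ {a : M} {b : N} (f g : G.obj a ⟶ b),
      adjGV.unit.app a ≫ V.map f = adjGV.unit.app a ≫ V.map g → f = g := by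
    intro a b f g h
    have h1 : G.map (adjGV.unit.app a ≫ V.map f) ≫ adjGV.counit.app b
        = G.map (adjGV.unit.app a ≫ V.map g) ≫ adjGV.counit.app b := by rw [h]
    simpa [G.map_comp, Category.assoc, adjGV.counit_naturality,
      adjGV.left_triangle_components_assoc] using h1
  have hδG : ∀ (m : M) (x : C),
      adjGV.unit.app (ρM.smul m x) ≫ V.map (δG m x)
        = ρM.smulHom (adjGV.unit.app m) (adj.unit.app x)
            ≫ δVinv (G.obj m) (F.obj x) := by
    intro m x
    simp [δG]
  have hinvnat : ∀ {n n' : N} {y y' : D} (f : n ⟶ n') (g : y ⟶ y'),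
      δVinv n y ≫ V.map (ρN.smulHom f g)
        = ρM.smulHom (V.map f) (U.map g) ≫ δVinv n' y' := by
    intro n n' y y' f g
    have h1 : δVinv n y ≫ V.map (ρN.smulHom f g)
        = δVinv n y ≫ (V.map (ρN.smulHom f g) ≫ cV.δ n' y') ≫ δVinv n' y' := by
      rw [Category.assoc, hinv₁, Category.comp_id]
    rw [h1, cV.natural f g]
    simp only [← Category.assoc]
    rw [hinv₂]
    simp
  have hinvcu : ∀ n : N,
      δVinv n (𝟙_ D) ≫ V.map (eqToHom (ρN.unit n))
        = ρM.smulHom (𝟙 (V.obj n)) OU.e ≫ eqToHom (ρM.unit (V.obj n)) := by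
    intro n
    calc δVinv n (𝟙_ D) ≫ V.map (eqToHom (ρN.unit n))
        = δVinv n (𝟙_ D) ≫ cV.δ n (𝟙_ D) ≫ ρM.smulHom (𝟙 (V.obj n)) OU.e
            ≫ eqToHom (ρM.unit (V.obj n)) := by rw [cV.counital n]
      _ = _ := by rw [← Category.assoc, hinv₂, Category.id_comp]
  have hinvca : ∀ (n : N) (x y : D),
      δVinv n (x ⊗ y) ≫ V.map (eqToHom (ρN.assoc n x y))
        = ρM.smulHom (𝟙 (V.obj n)) (OU.d x y)
            ≫ eqToHom (ρM.assoc (V.obj n) (U.obj x) (U.obj y))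
            ≫ ρM.smulHom (δVinv n x) (𝟙 (U.obj y)) ≫ δVinv (ρN.smul n x) y := by
    intro n x y
    have h3 : (cV.δ n (x ⊗ y) ≫ ρM.smulHom (𝟙 (V.obj n)) (OU.d x y)
          ≫ eqToHom (ρM.assoc (V.obj n) (U.obj x) (U.obj y)))
          ≫ ρM.smulHom (δVinv n x) (𝟙 (U.obj y)) ≫ δVinv (ρN.smul n x) y
        = (V.map (eqToHom (ρN.assoc n x y)) ≫ cV.δ (ρN.smul n x) y
          ≫ ρM.smulHom (cV.δ n x) (𝟙 (U.obj y)))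
          ≫ ρM.smulHom (δVinv n x) (𝟙 (U.obj y)) ≫ δVinv (ρN.smul n x) y := by
      rw [cV.coassoc n x y]
    have h4 : ρM.smulHom (cV.δ n x) (𝟙 (U.obj y))
          ≫ ρM.smulHom (δVinv n x) (𝟙 (U.obj y))
        = 𝟙 (ρM.smul (V.obj (ρN.smul n x)) (U.obj y)) := by
      rw [← ρM.smulHom_comp, hinv₁, Category.comp_id, ρM.smulHom_id]
    simp only [Category.assoc] at h3
    rw [← Category.assoc (ρM.smulHom (cV.δ n x) (𝟙 (U.obj y))), h4,
      Category.id_comp, hinv₁, Category.comp_id] at h3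
    calc δVinv n (x ⊗ y) ≫ V.map (eqToHom (ρN.assoc n x y))
        = δVinv n (x ⊗ y) ≫ cV.δ n (x ⊗ y) ≫ ρM.smulHom (𝟙 (V.obj n)) (OU.d x y)
            ≫ eqToHom (ρM.assoc (V.obj n) (U.obj x) (U.obj y))
            ≫ ρM.smulHom (δVinv n x) (𝟙 (U.obj y)) ≫ δVinv (ρN.smul n x) y := by
          rw [← h3]
      _ = _ := by rw [← Category.assoc, hinv₂, Category.id_comp]
  refine ⟨?_, ?_, ?_⟩
  · -- naturality
    intro m m' x x' f g
    apply hGV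
    rw [V.map_comp]
    rw [adjGV.unit_naturality_assoc (ρM.smulHom f g) (V.map (δG m' x'))]
    rw [hδG m' x', V.map_comp, ← Category.assoc (adjGV.unit.app _), hδG m x,
      Category.assoc, hinvnat (G.map f) (F.map g), ← Category.assoc,
      ← Category.assoc, ← ρM.smulHom_comp, ← ρM.smulHom_comp,
      adjGV.unit_naturality f, adj.unit_naturality g]
  · -- coassociativity
    intro m x y
    apply hGV
    simp only [Functor.id_obj, Functor.comp_obj, Functor.map_comp, Category.assoc,
      Adjunction.unit_naturality_assoc, Adjunction.right_triangle_components,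
      Adjunction.right_triangle_components_assoc, Category.comp_id, δG]
    -- LHS
    rw [← Category.assoc (δVinv (G.obj m) (F.obj (x ⊗ y))),
      hinvnat (𝟙 (G.obj m)) (OF.d x y), V.map_id]
    simp only [Category.assoc]
    rw [hinvca (G.obj m) (F.obj x) (F.obj y)]
    rw [← Category.assoc (ρM.smulHom (adjGV.unit.app m) (adj.unit.app (x ⊗ y))),
      ← ρM.smulHom_comp]
    simp only [Functor.comp_obj, Functor.id_obj, Category.comp_id]
    rw [← Category.assoc (ρM.smulHom (adjGV.unit.app m)
        (adj.unit.app (x ⊗ y) ≫ U.map (OF.d x y))),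
      ← ρM.smulHom_comp]
    simp only [Functor.comp_obj, Functor.id_obj, Category.comp_id]
    rw [Category.assoc (adj.unit.app (x ⊗ y)),
      hu x y, ρM.assoc_hom (adjGV.unit.app m) (adj.unit.app x) (adj.unit.app y)]
    simp only [Category.assoc, eqToHom_trans_assoc, eqToHom_refl, Category.id_comp]
    rw [← Category.assoc
      (ρM.smulHom (ρM.smulHom (adjGV.unit.app m) (adj.unit.app x)) (adj.unit.app y))
      (ρM.smulHom (δVinv (G.obj m) (F.obj x)) (𝟙 (U.obj (F.obj y)))),
      ← ρM.smulHom_comp]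
    simp only [Functor.comp_obj, Functor.id_obj, Category.comp_id]
    -- RHS
    rw [hinvnat, U.map_id]
    rw [← Category.assoc (ρM.smulHom (adjGV.unit.app (ρM.smul m x)) (adj.unit.app y)),
      ← ρM.smulHom_comp]
    simp only [Functor.comp_obj, Functor.id_obj, Category.comp_id]
    have hδG2 : adjGV.unit.app (ρM.smul m x) ≫
        V.map (G.map (ρM.smulHom (adjGV.unit.app m) (adj.unit.app x)) ≫
          G.map (δVinv (G.obj m) (F.obj x)) ≫
            adjGV.counit.app (ρN.smul (G.obj m) (F.obj x)))
        = ρM.smulHom (adjGV.unit.app m) (adj.unit.app x)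
            ≫ δVinv (G.obj m) (F.obj x) := by simp
    rw [hδG2]
  · -- counitality
    intro m
    apply hGV
    simp only [Functor.id_obj, Functor.comp_obj, Functor.map_comp, Category.assoc,
      Adjunction.unit_naturality_assoc, Adjunction.right_triangle_components,
      Adjunction.right_triangle_components_assoc, Category.comp_id, δG]
    rw [← Category.assoc (δVinv (G.obj m) (F.obj (𝟙_ C))),
      hinvnat (𝟙 (G.obj m)) OF.e, V.map_id]
    simp only [Category.assoc]
    rw [hinvcu (G.obj m)]
    rw [← Category.assoc (ρM.smulHom (adjGV.unit.app m) (adj.unit.app (𝟙_ C))),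
      ← ρM.smulHom_comp]
    simp only [Functor.comp_obj, Functor.id_obj, Category.comp_id]
    rw [← Category.assoc (ρM.smulHom (adjGV.unit.app m)
        (adj.unit.app (𝟙_ C) ≫ U.map OF.e)),
      ← ρM.smulHom_comp]
    simp only [Functor.comp_obj, Functor.id_obj, Category.comp_id]
    rw [Category.assoc (adj.unit.app (𝟙_ C)),
      hu0, ρM.unit_hom (adjGV.unit.app m)]
    simp only [Category.assoc, eqToHom_trans_assoc, eqToHom_refl, Category.id_comp,
      Category.comp_id]
    have nat := adjGV.unit.naturality (eqToHom (ρM.unit m))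
    simp only [Functor.id_map, Functor.comp_map, Functor.id_obj, Functor.comp_obj] at nat
    simp [← nat]

end ComoduleAdjunctions
end

section
/- Let G ⊣ V be a comodule adjunction over a monoidal adjunction F ⊣ U. Then the composite K = VG is a comodule monad over the bimonad B = UF, with coaction at (m, x) given by V applied to δ^(G)_{m,x} followed by δ^(V)_{Gm, Fx} : VG(m ◁ x) → V(Gm ◀ Fx) → VGm ◁ UFx; i.e., this coaction is coassociative and counital with respect to the opmonoidal structure of B, and the multiplication V ε^{G⊣V} G and unit η^{G⊣V} of the monad VG are morphisms of comodule functors. -/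
open CategoryTheory Category MonoidalCategory

universe v₁ v₂ u₁ u₂

section ComoduleAdjunctions

variable {C : Type u₁} [Category.{v₁} C] [MonoidalCategory C]
  {D : Type u₂} [Category.{v₂} D] [MonoidalCategory D]
  {M : Type u₁} [Category.{v₁} M] {N : Type u₂} [Category.{v₂} N]

universe v₃ u₃

/-- Composition of opmonoidal structures. -/
def compOpmon {C : Type u₁} [Category.{v₁} C] [MonoidalCategory C]
    {D : Type u₂} [Category.{v₂} D] [MonoidalCategory D]
    {E : Type u₃} [Category.{v₃} E] [MonoidalCategory E]
    {F : C ⥤ D} {U : D ⥤ E} (OF : OpmonStr F) (OU : OpmonStr U) :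
    OpmonStr (F ⋙ U) where
  d x y := U.map (OF.d x y) ≫ OU.d (F.obj x) (F.obj y)
  e := U.map OF.e ≫ OU.e
  d_natural f g := by
    dsimp only [Functor.comp_map]
    rw [← Category.assoc, ← U.map_comp, OF.d_natural, U.map_comp,
      Category.assoc, OU.d_natural, Category.assoc]
  coassoc x y z := by
    dsimp only [Functor.comp_obj, Functor.comp_map]
    have h1 : ((U.map (OF.d x y) ≫ OU.d (F.obj x) (F.obj y)) ⊗ₘ 𝟙 (U.obj (F.obj z)))
        = (U.map (OF.d x y) ⊗ₘ 𝟙 (U.obj (F.obj z))) ≫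
          (OU.d (F.obj x) (F.obj y) ⊗ₘ 𝟙 (U.obj (F.obj z))) := by
      rw [tensorHom_comp_tensorHom, comp_id]
    have h2 : (𝟙 (U.obj (F.obj x)) ⊗ₘ (U.map (OF.d y z) ≫ OU.d (F.obj y) (F.obj z)))
        = (𝟙 (U.obj (F.obj x)) ⊗ₘ U.map (OF.d y z)) ≫
          (𝟙 (U.obj (F.obj x)) ⊗ₘ OU.d (F.obj y) (F.obj z)) := by
      rw [tensorHom_comp_tensorHom, comp_id]
    have n1 : OU.d (F.obj (x ⊗ y)) (F.obj z) ≫ (U.map (OF.d x y) ⊗ₘ 𝟙 (U.obj (F.obj z)))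
        = U.map (OF.d x y ⊗ₘ 𝟙 (F.obj z)) ≫ OU.d (F.obj x ⊗ F.obj y) (F.obj z) := by
      rw [OU.d_natural, U.map_id]
    have n2 : U.map (𝟙 (F.obj x) ⊗ₘ OF.d y z) ≫ OU.d (F.obj x) (F.obj y ⊗ F.obj z)
        = OU.d (F.obj x) (F.obj (y ⊗ z)) ≫ (𝟙 (U.obj (F.obj x)) ⊗ₘ U.map (OF.d y z)) := by
      rw [OU.d_natural, U.map_id]
    have hF := congrArg U.map (OF.coassoc x y z)
    simp only [Functor.map_comp] at hF
    rw [h1, h2]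
    simp only [Category.assoc]
    rw [reassoc_of% n1, OU.coassoc, reassoc_of% hF, reassoc_of% n2]
  counit_left x := by
    dsimp only [Functor.comp_obj, Functor.comp_map]
    have h1 : ((U.map OF.e ≫ OU.e) ⊗ₘ 𝟙 (U.obj (F.obj x)))
        = (U.map OF.e ⊗ₘ 𝟙 (U.obj (F.obj x))) ≫ (OU.e ⊗ₘ 𝟙 (U.obj (F.obj x))) := by
      rw [tensorHom_comp_tensorHom, comp_id]
    have n1 : OU.d (F.obj (𝟙_ C)) (F.obj x) ≫ (U.map OF.e ⊗ₘ 𝟙 (U.obj (F.obj x)))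
        = U.map (OF.e ⊗ₘ 𝟙 (F.obj x)) ≫ OU.d (𝟙_ D) (F.obj x) := by
      rw [OU.d_natural, U.map_id]
    have hF := congrArg U.map (OF.counit_left x)
    simp only [Functor.map_comp] at hF
    rw [h1]
    simp only [Category.assoc]
    rw [reassoc_of% n1, OU.counit_left, hF]
  counit_right x := by
    dsimp only [Functor.comp_obj, Functor.comp_map]
    have h1 : (𝟙 (U.obj (F.obj x)) ⊗ₘ (U.map OF.e ≫ OU.e))
        = (𝟙 (U.obj (F.obj x)) ⊗ₘ U.map OF.e) ≫ (𝟙 (U.obj (F.obj x)) ⊗ₘ OU.e) := by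
      rw [tensorHom_comp_tensorHom, comp_id]
    have n1 : OU.d (F.obj x) (F.obj (𝟙_ C)) ≫ (𝟙 (U.obj (F.obj x)) ⊗ₘ U.map OF.e)
        = U.map (𝟙 (F.obj x) ⊗ₘ OF.e) ≫ OU.d (F.obj x) (𝟙_ D) := by
      rw [OU.d_natural, U.map_id]
    have hF := congrArg U.map (OF.counit_right x)
    simp only [Functor.map_comp] at hF
    rw [h1]
    simp only [Category.assoc]
    rw [reassoc_of% n1, OU.counit_right, hF]

/-- Composition of comodule functor structures. -/
def compComod {C : Type u₁} [Category.{v₁} C] [MonoidalCategory C]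
    {D : Type u₂} [Category.{v₂} D] [MonoidalCategory D]
    {E : Type u₃} [Category.{v₃} E] [MonoidalCategory E]
    {M : Type u₁} [Category.{v₁} M] {N : Type u₂} [Category.{v₂} N]
    {P : Type u₃} [Category.{v₃} P]
    {F : C ⥤ D} {U : D ⥤ E} {OF : OpmonStr F} {OU : OpmonStr U}
    {ρM : RAct C M} {ρN : RAct D N} {ρP : RAct E P}
    {G : M ⥤ N} {V : N ⥤ P}
    (cG : ComodStr F OF ρM ρN G) (cV : ComodStr U OU ρN ρP V) :
    ComodStr (F ⋙ U) (compOpmon OF OU) ρM ρP (G ⋙ V) where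
  δ m x := V.map (cG.δ m x) ≫ cV.δ (G.obj m) (F.obj x)
  natural f g := by
    dsimp only [Functor.comp_obj, Functor.comp_map]
    rw [← Category.assoc, ← V.map_comp, cG.natural, V.map_comp,
      Category.assoc, cV.natural, Category.assoc]
  coassoc m x y := by
    dsimp only [Functor.comp_obj, Functor.comp_map, compOpmon]
    have h1 : ρP.smulHom (𝟙 (V.obj (G.obj m)))
          (U.map (OF.d x y) ≫ OU.d (F.obj x) (F.obj y))
        = ρP.smulHom (𝟙 _) (U.map (OF.d x y)) ≫ ρP.smulHom (𝟙 _) (OU.d (F.obj x) (F.obj y)) := by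
      rw [← ρP.smulHom_comp, comp_id]
    have s2 : cV.δ (G.obj m) (F.obj (x ⊗ y)) ≫
          ρP.smulHom (𝟙 (V.obj (G.obj m))) (U.map (OF.d x y))
        = V.map (ρN.smulHom (𝟙 (G.obj m)) (OF.d x y)) ≫
          cV.δ (G.obj m) (F.obj x ⊗ F.obj y) := by
      rw [cV.natural, V.map_id]
    have s4 : V.map (ρN.smulHom (cG.δ m x) (𝟙 (F.obj y))) ≫
          cV.δ (ρN.smul (G.obj m) (F.obj x)) (F.obj y)
        = cV.δ (G.obj (ρM.smul m x)) (F.obj y) ≫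
          ρP.smulHom (V.map (cG.δ m x)) (𝟙 (U.obj (F.obj y))) := by
      rw [cV.natural, U.map_id]
    have s5 : ρP.smulHom (V.map (cG.δ m x) ≫ cV.δ (G.obj m) (F.obj x))
          (𝟙 (U.obj (F.obj y)))
        = ρP.smulHom (V.map (cG.δ m x)) (𝟙 (U.obj (F.obj y))) ≫
          ρP.smulHom (cV.δ (G.obj m) (F.obj x)) (𝟙 (U.obj (F.obj y))) := by
      rw [← ρP.smulHom_comp, comp_id]
    have hG := congrArg V.map (cG.coassoc m x y)
    simp only [Functor.map_comp] at hG
    rw [h1, s5]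
    simp only [Category.assoc]
    rw [reassoc_of% s2, cV.coassoc, reassoc_of% hG, reassoc_of% s4]
  counital m := by
    dsimp only [Functor.comp_obj, Functor.comp_map, compOpmon]
    have h1 : ρP.smulHom (𝟙 (V.obj (G.obj m))) (U.map OF.e ≫ OU.e)
        = ρP.smulHom (𝟙 _) (U.map OF.e) ≫ ρP.smulHom (𝟙 _) OU.e := by
      rw [← ρP.smulHom_comp, comp_id]
    have s2 : cV.δ (G.obj m) (F.obj (𝟙_ C)) ≫
          ρP.smulHom (𝟙 (V.obj (G.obj m))) (U.map OF.e)
        = V.map (ρN.smulHom (𝟙 (G.obj m)) OF.e) ≫ cV.δ (G.obj m) (𝟙_ D) := by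
      rw [cV.natural, V.map_id]
    have hG := congrArg V.map (cG.counital m)
    simp only [Functor.map_comp] at hG
    rw [h1]
    simp only [Category.assoc]
    rw [reassoc_of% s2, cV.counital, hG]


/-- Let `G ⊣ V` be a comodule adjunction over a monoidal adjunction `F ⊣ U` (with `M` a
right `C`-module category, here `D = C`-side categories in the same universes).  Then
`B = UF` is a bimonad and `K = VG` is a comodule monad over `B`, with coaction
`δ^V_{Gm,Fx} ∘ V δ^G_{m,x}` and whose multiplication `V ε G` and unit are morphisms of
comodule functors. -/
theorem stmt14 {C : Type u₁} [Category.{v₁} C] [MonoidalCategory C]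
    {D : Type u₁} [Category.{v₁} D] [MonoidalCategory D]
    {M : Type u₁} [Category.{v₁} M] {N : Type u₁} [Category.{v₁} N]
    (F : C ⥤ D) (U : D ⥤ C) (OF : OpmonStr F) (OU : OpmonStr U)
    (adj : F ⊣ U)
    (hd : ∀ x y : D, IsIso (OU.d x y)) (he : IsIso OU.e)
    (hu : ∀ x y : C, adj.unit.app (x ⊗ y) ≫ U.map (OF.d x y) ≫ OU.d (F.obj x) (F.obj y)
      = adj.unit.app x ⊗ₘ adj.unit.app y)
    (hu0 : adj.unit.app (𝟙_ C) ≫ U.map OF.e ≫ OU.e = 𝟙 (𝟙_ C))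
    (hc : ∀ x y : D, F.map (OU.d x y) ≫ OF.d (U.obj x) (U.obj y) ≫
      (adj.counit.app x ⊗ₘ adj.counit.app y) = adj.counit.app (x ⊗ y))
    (hc0 : F.map OU.e ≫ OF.e = adj.counit.app (𝟙_ D))
    (ρM : RAct C M) (ρN : RAct D N)
    (G : M ⥤ N) (V : N ⥤ M) (adjGV : G ⊣ V)
    (L : ComodAdjLift F U OF OU adj ρM ρN G V adjGV) :
    ∃ (bs : BimonadStr adj.toMonad)
      (co : Coaction adj.toMonad bs ρM adjGV.toMonad),
      (∀ x y : C, bs.op.d x y = U.map (OF.d x y) ≫ OU.d (F.obj x) (F.obj y)) ∧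
      (bs.op.e = U.map OF.e ≫ OU.e) ∧
      (∀ (m : M) (x : C),
        co.δ m x = V.map (L.cG.δ m x) ≫ L.cV.δ (G.obj m) (F.obj x)) := by
  clear hd he
  refine ⟨{ op := compOpmon OF OU
            mul_opmon := ?_
            mul_counit := ?_
            unit_opmon := ?_
            unit_counit := ?_ },
          { δ := fun m x => V.map (L.cG.δ m x) ≫ L.cV.δ (G.obj m) (F.obj x)
            natural := (compComod L.cG L.cV).natural
            coassoc := (compComod L.cG L.cV).coassoc
            counital := (compComod L.cG L.cV).counital
            mul_comod := ?_
            unit_comod := ?_ },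
          fun _ _ => rfl, rfl, fun _ _ => rfl⟩
  · -- mul_opmon
    intro x y
    have e1 : adj.counit.app (F.obj (x ⊗ y)) ≫ OF.d x y
        = F.map (U.map (OF.d x y)) ≫ adj.counit.app (F.obj x ⊗ F.obj y) := by
      simpa using (adj.counit.naturality (OF.d x y)).symm
    have n : U.map (adj.counit.app (F.obj x) ⊗ₘ adj.counit.app (F.obj y)) ≫
          OU.d (F.obj x) (F.obj y)
        = OU.d (F.obj (U.obj (F.obj x))) (F.obj (U.obj (F.obj y))) ≫
          (U.map (adj.counit.app (F.obj x)) ⊗ₘ U.map (adj.counit.app (F.obj y))) :=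
      OU.d_natural _ _
    dsimp [Adjunction.toMonad, compOpmon]
    rw [← U.map_comp_assoc, e1, U.map_comp, Category.assoc,
      ← hc (F.obj x) (F.obj y)]
    simp only [Functor.map_comp, Category.assoc]
    rw [n]
  · -- mul_counit
    have e1 : adj.counit.app (F.obj (𝟙_ C)) ≫ OF.e
        = F.map (U.map OF.e) ≫ adj.counit.app (𝟙_ D) := by
      simpa using (adj.counit.naturality OF.e).symm
    dsimp [Adjunction.toMonad, compOpmon]
    rw [← U.map_comp_assoc, e1, U.map_comp, Category.assoc, ← hc0]
    simp only [Functor.map_comp, Category.assoc]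
  · -- unit_opmon
    intro x y
    exact hu x y
  · -- unit_counit
    exact hu0
  · -- mul_comod
    intro m x
    have h1 : adjGV.counit.app (G.obj (ρM.smul m x)) ≫ L.cG.δ m x
        = G.map (V.map (L.cG.δ m x)) ≫
          adjGV.counit.app (ρN.smul (G.obj m) (F.obj x)) := by
      simpa using (adjGV.counit.naturality (L.cG.δ m x)).symm
    have h3 : V.map (ρN.smulHom (adjGV.counit.app (G.obj m)) (adj.counit.app (F.obj x))) ≫
          L.cV.δ (G.obj m) (F.obj x)
        = L.cV.δ (G.obj (V.obj (G.obj m))) (F.obj (U.obj (F.obj x))) ≫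
          ρM.smulHom (V.map (adjGV.counit.app (G.obj m)))
            (U.map (adj.counit.app (F.obj x))) :=
      L.cV.natural _ _
    show V.map (adjGV.counit.app (G.obj (ρM.smul m x))) ≫
        (V.map (L.cG.δ m x) ≫ L.cV.δ (G.obj m) (F.obj x)) =
      V.map (G.map (V.map (L.cG.δ m x) ≫ L.cV.δ (G.obj m) (F.obj x))) ≫
        (V.map (L.cG.δ (V.obj (G.obj m)) (U.obj (F.obj x))) ≫
          L.cV.δ (G.obj (V.obj (G.obj m))) (F.obj (U.obj (F.obj x)))) ≫
        ρM.smulHom (V.map (adjGV.counit.app (G.obj m))) (U.map (adj.counit.app (F.obj x)))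
    rw [← V.map_comp_assoc, h1, V.map_comp, Category.assoc,
      ← L.counit_compat (G.obj m) (F.obj x)]
    simp only [Functor.map_comp, Category.assoc]
    rw [h3]
  · -- unit_comod
    intro m x
    show adjGV.unit.app (ρM.smul m x) ≫
        (V.map (L.cG.δ m x) ≫ L.cV.δ (G.obj m) (F.obj x)) =
      ρM.smulHom (adjGV.unit.app m) (adj.unit.app x)
    rw [← Category.assoc, Category.assoc]
    exact L.unit_compat m x
end ComoduleAdjunctions
end

section
/- Let G ⊣ V be a comodule adjunction over a monoidal adjunction F ⊣ U, with induced comodule monad K = VG over the bimonad B = UF. Then the comparison functor Σ^K : N → M^K, n ↦ (Vn, V ε_n), is a strong comodule functor over the comparison functor Σ^B : D → C^B, and moreover U^K ∘ Σ^K = V and Σ^K ∘ G = F^K as comodule functors. -/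
open CategoryTheory Category MonoidalCategory

universe v₁ v₂ u₁ u₂

section ComoduleAdjunctions

variable {C : Type u₁} [Category.{v₁} C] [MonoidalCategory C]
  {D : Type u₂} [Category.{v₂} D] [MonoidalCategory D]
  {M : Type u₁} [Category.{v₁} M] {N : Type u₂} [Category.{v₂} N]

/-- Let `G ⊣ V` be a comodule adjunction over a monoidal adjunction `F ⊣ U`, with induced
comodule monad `K = VG` over the bimonad `B = UF`.  The comparison functor
`Σ^K : N ⥤ M^K`, `n ↦ (Vn, V ε_n)`, is a strong comodule functor over `Σ^B`: its
coaction is the lift of `δ^V` (i.e. `δ^V_{n,y}` is a morphism of `K`-algebras from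
`Σ^K(n ◀ y)` to `Σ^K n ◁ Σ^B y`, and it is invertible); moreover `U^K ∘ Σ^K = V`
and `Σ^K ∘ G = F^K`. -/
theorem stmt15 (F : C ⥤ D) (U : D ⥤ C) (OF : OpmonStr F) (OU : OpmonStr U)
    (adj : F ⊣ U)
    (hd : ∀ x y : D, IsIso (OU.d x y)) (he : IsIso OU.e)
    (hu : ∀ x y : C, adj.unit.app (x ⊗ y) ≫ U.map (OF.d x y) ≫ OU.d (F.obj x) (F.obj y)
      = adj.unit.app x ⊗ₘ adj.unit.app y)
    (hu0 : adj.unit.app (𝟙_ C) ≫ U.map OF.e ≫ OU.e = 𝟙 (𝟙_ C))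
    (hc : ∀ x y : D, F.map (OU.d x y) ≫ OF.d (U.obj x) (U.obj y) ≫
      (adj.counit.app x ⊗ₘ adj.counit.app y) = adj.counit.app (x ⊗ y))
    (hc0 : F.map OU.e ≫ OF.e = adj.counit.app (𝟙_ D))
    (ρM : RAct C M) (ρN : RAct D N)
    (G : M ⥤ N) (V : N ⥤ M) (adjGV : G ⊣ V)
    (L : ComodAdjLift F U OF OU adj ρM ρN G V adjGV) :
    (∀ (n : N) (y : D),
      V.map (adjGV.counit.app (ρN.smul n y)) ≫ L.cV.δ n y =
        V.map (G.map (L.cV.δ n y)) ≫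
          (V.map (L.cG.δ (V.obj n) (U.obj y)) ≫
            L.cV.δ (G.obj (V.obj n)) (F.obj (U.obj y))) ≫
          ρM.smulHom (V.map (adjGV.counit.app n)) (U.map (adj.counit.app y))) ∧
    (∀ (n : N) (y : D), IsIso (L.cV.δ n y)) ∧
    (Monad.comparison adjGV ⋙ adjGV.toMonad.forget = V) ∧
    (G ⋙ Monad.comparison adjGV = adjGV.toMonad.free) := by
  refine ⟨?_, ?_, rfl, rfl⟩
  · intro n y
    have hnat := L.cV.natural (adjGV.counit.app n) (adj.counit.app y)
    simp only [Functor.id_obj, Functor.comp_obj] at hnat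
    rw [← L.counit_compat n y]
    simp only [Functor.map_comp, Category.assoc]
    rw [hnat]
  · intro n y
    have hnat := L.cV.natural (adjGV.counit.app n) (adj.counit.app y)
    simp only [Functor.id_obj, Functor.comp_obj] at hnat
    have h1 := adjGV.unit.naturality (L.cV.δ n y)
    simp only [Functor.id_map, Functor.comp_map, Functor.id_obj, Functor.comp_obj] at h1
    have h2 := L.counit_compat n y
    have h3 := adjGV.right_triangle_components (ρN.smul n y)
    refine ⟨⟨adjGV.unit.app (ρM.smul (V.obj n) (U.obj y)) ≫
      V.map (L.cG.δ (V.obj n) (U.obj y)) ≫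
      V.map (ρN.smulHom (adjGV.counit.app n) (adj.counit.app y)), ?_, ?_⟩⟩
    · rw [← Category.assoc, h1]
      simp only [Category.assoc, ← Functor.map_comp]
      rw [h2]
      exact h3
    · simp only [Category.assoc]
      rw [hnat, reassoc_of% (L.unit_compat (V.obj n) (U.obj y)), ← ρM.smulHom_comp,
        adjGV.right_triangle_components, adj.right_triangle_components, ρM.smulHom_id]
end ComoduleAdjunctions
end

section
/- Let B be a bimonad on a monoidal category C and K a monad on a right C-module category M. Then coactions of B on K making K a comodule monad are in bijection with right actions of C^B on M^K such that the forgetful functor U^K is a strict comodule functor over the strict monoidal forgetful functor U^B. -/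
open CategoryTheory Category MonoidalCategory

universe v₁ v₂ u₁ u₂

/-- A right action of `C^t` on `M^K` lifting the action of `C` on `M`, i.e. such that the
forgetful functor `U^K` is a strict comodule functor over the strict monoidal forgetful
functor `U^t`.  Associativity and unitality are stated via the canonical monoidal
structure of `C^t` determined by the bimonad `bs`. -/
structure LiftedAction {C : Type u₁} [Category.{v₁} C] [MonoidalCategory C]
    {M : Type u₁} [Category.{v₁} M]
    (t : Monad C) (bs : BimonadStr t) (ρ : RAct C M) (K : Monad M) where
  act : K.Algebra → t.Algebra → K.Algebra
  actHom : ∀ {p p' : K.Algebra} {q q' : t.Algebra},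
    (p ⟶ p') → (q ⟶ q') → (act p q ⟶ act p' q')
  actHom_id : ∀ (p : K.Algebra) (q : t.Algebra), actHom (𝟙 p) (𝟙 q) = 𝟙 (act p q)
  actHom_comp : ∀ {p p' p'' : K.Algebra} {q q' q'' : t.Algebra}
    (f : p ⟶ p') (f' : p' ⟶ p'') (g : q ⟶ q') (g' : q' ⟶ q''),
    actHom (f ≫ f') (g ≫ g') = actHom f g ≫ actHom f' g'
  strict_obj : ∀ (p : K.Algebra) (q : t.Algebra), (act p q).A = ρ.smul p.A q.A
  strict_hom : ∀ {p p' : K.Algebra} {q q' : t.Algebra} (f : p ⟶ p') (g : q ⟶ q'),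
    HEq (actHom f g).f (ρ.smulHom f.f g.f)
  assoc : ∀ (p : K.Algebra) (q q' : t.Algebra)
    (h₁ : t.η.app (q.A ⊗ q'.A) ≫ (bs.op.d q.A q'.A ≫ (q.a ⊗ₘ q'.a)) = 𝟙 (q.A ⊗ q'.A))
    (h₂ : t.μ.app (q.A ⊗ q'.A) ≫ (bs.op.d q.A q'.A ≫ (q.a ⊗ₘ q'.a)) =
      t.map (bs.op.d q.A q'.A ≫ (q.a ⊗ₘ q'.a)) ≫ (bs.op.d q.A q'.A ≫ (q.a ⊗ₘ q'.a))),
    act p ⟨q.A ⊗ q'.A, bs.op.d q.A q'.A ≫ (q.a ⊗ₘ q'.a), h₁, h₂⟩ = act (act p q) q'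
  unit : ∀ (p : K.Algebra)
    (h₁ : t.η.app (𝟙_ C) ≫ bs.op.e = 𝟙 (𝟙_ C))
    (h₂ : t.μ.app (𝟙_ C) ≫ bs.op.e = t.map bs.op.e ≫ bs.op.e),
    act p ⟨𝟙_ C, bs.op.e, h₁, h₂⟩ = p


namespace Stmt16

variable {C : Type u₁} [Category.{v₁} C] [MonoidalCategory C]
  {M : Type u₁} [Category.{v₁} M]

theorem smulHom_eqToHom (ρ : RAct C M) {m m' : M} {x x' : C} (h : m = m') (h' : x = x') :
    ρ.smulHom (eqToHom h) (eqToHom h') = eqToHom (by rw [h, h']) := by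
  subst h; subst h'; simp [ρ.smulHom_id]

theorem smulHom_eqToHom_id (ρ : RAct C M) {m m' : M} (h : m = m') (x : C) :
    ρ.smulHom (eqToHom h) (𝟙 x) = eqToHom (by rw [h]) := by
  subst h; simp [ρ.smulHom_id]

theorem smulHom_id_eqToHom (ρ : RAct C M) (m : M) {x x' : C} (h : x = x') :
    ρ.smulHom (𝟙 m) (eqToHom h) = eqToHom (by rw [h]) := by
  subst h; simp [ρ.smulHom_id]

theorem algebra_ext {K : Monad M} {X Y : K.Algebra} (h : X.A = Y.A) (h' : HEq X.a Y.a) :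
    X = Y := by
  cases X; cases Y
  dsimp at h
  subst h
  cases eq_of_heq h'
  rfl

theorem algebra_a_eq {K : Monad M} {X Y : K.Algebra} (u : X = Y) :
    X.a = eqToHom (congrArg (fun z : K.Algebra => K.obj z.A) u) ≫ Y.a ≫
      eqToHom (congrArg Monad.Algebra.A u).symm := by
  subst u; simp

theorem algebraHom_heq {K : Monad M} {X X' Y Y' : K.Algebra} (hX : X = X') (hY : Y = Y')
    {u : X ⟶ Y} {v : X' ⟶ Y'} (h : HEq u.f v.f) : HEq u v := by
  subst hX; subst hY
  exact heq_of_eq (Monad.Algebra.Hom.ext' _ _ _ _ (eq_of_heq h))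

/-- The structure map of an algebra, as an algebra morphism from the free algebra. -/
def aHom {D : Type u₂} [Category.{v₂} D] {T : Monad D} (p : T.Algebra) : T.free.obj p.A ⟶ p where
  f := p.a
  h := p.assoc.symm

@[simp] theorem aHom_f {D : Type u₂} [Category.{v₂} D] {T : Monad D} (p : T.Algebra) :
    (aHom p).f = p.a := rfl

section

variable (t : Monad C) (bs : BimonadStr t) (ρ : RAct C M) (K : Monad M)

theorem tAlg_unit (q q' : t.Algebra) :
    t.η.app (q.A ⊗ q'.A) ≫ (bs.op.d q.A q'.A ≫ (q.a ⊗ₘ q'.a)) = 𝟙 (q.A ⊗ q'.A) := by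
  rw [← Category.assoc, bs.unit_opmon, tensorHom_comp_tensorHom, q.unit, q'.unit]
  exact id_tensorHom_id _ _

theorem tAlg_assoc (q q' : t.Algebra) :
    t.μ.app (q.A ⊗ q'.A) ≫ (bs.op.d q.A q'.A ≫ (q.a ⊗ₘ q'.a)) =
      t.map (bs.op.d q.A q'.A ≫ (q.a ⊗ₘ q'.a)) ≫ (bs.op.d q.A q'.A ≫ (q.a ⊗ₘ q'.a)) := by
  rw [← Category.assoc, bs.mul_opmon, Category.assoc, Category.assoc, tensorHom_comp_tensorHom,
    q.assoc, q'.assoc, ← tensorHom_comp_tensorHom, Functor.map_comp, Category.assoc]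
  congr 1
  rw [← Category.assoc, ← Category.assoc, ← bs.op.d_natural]

/-- The tensor product of two `t`-algebras. -/
@[reducible] def tAlg (q q' : t.Algebra) : t.Algebra where
  A := q.A ⊗ q'.A
  a := bs.op.d q.A q'.A ≫ (q.a ⊗ₘ q'.a)
  unit := tAlg_unit t bs q q'
  assoc := tAlg_assoc t bs q q'

/-- The unit `t`-algebra. -/
@[reducible] def eAlg : t.Algebra where
  A := 𝟙_ C
  a := bs.op.e
  unit := bs.unit_counit
  assoc := bs.mul_counit

/-- `d x y` as an algebra morphism. -/
def dHom (x y : C) : t.free.obj (x ⊗ y) ⟶ tAlg t bs (t.free.obj x) (t.free.obj y) where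
  f := bs.op.d x y
  h := by
    dsimp [tAlg]
    exact (bs.mul_opmon x y).symm

@[simp] theorem dHom_f (x y : C) : (dHom t bs x y).f = bs.op.d x y := rfl

/-- `e` as an algebra morphism. -/
def eHom : t.free.obj (𝟙_ C) ⟶ eAlg t bs where
  f := bs.op.e
  h := bs.mul_counit.symm

@[simp] theorem eHom_f : (eHom t bs).f = bs.op.e := rfl

end

section

variable {t : Monad C} {bs : BimonadStr t} {ρ : RAct C M} {K : Monad M}

theorem actHom_f (L : LiftedAction t bs ρ K) {p p' : K.Algebra} {q q' : t.Algebra}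
    (u : p ⟶ p') (v : q ⟶ q') :
    (L.actHom u v).f =
      eqToHom (L.strict_obj p q) ≫ ρ.smulHom u.f v.f ≫ eqToHom (L.strict_obj p' q').symm :=
  (conj_eqToHom_iff_heq _ _ (L.strict_obj p q) (L.strict_obj p' q')).2 (L.strict_hom u v)

theorem eqToHom_smulHom (L : LiftedAction t bs ρ K) {p p' : K.Algebra} {q q' : t.Algebra}
    (u : p ⟶ p') (v : q ⟶ q') :
    eqToHom (L.strict_obj p q) ≫ ρ.smulHom u.f v.f =
      (L.actHom u v).f ≫ eqToHom (L.strict_obj p' q') := by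
  rw [actHom_f]; simp

theorem step (L : LiftedAction t bs ρ K) {p p' : K.Algebra} {q q' : t.Algebra}
    (u : p ⟶ p') (v : q ⟶ q') {Z : M} (w : Z ⟶ ρ.smul p.A q.A) :
    K.map (w ≫ eqToHom (L.strict_obj p q).symm) ≫ (L.act p q).a ≫
        eqToHom (L.strict_obj p q) ≫ ρ.smulHom u.f v.f =
      K.map (w ≫ ρ.smulHom u.f v.f ≫ eqToHom (L.strict_obj p' q').symm) ≫
        (L.act p' q').a ≫ eqToHom (L.strict_obj p' q') := by
  rw [eqToHom_smulHom]
  slice_lhs 2 3 => rw [← (L.actHom u v).h]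
  rw [actHom_f]
  simp only [Category.assoc]
  rw [← Functor.map_comp_assoc]
  simp only [Category.assoc, eqToHom_trans_assoc, eqToHom_refl, Category.id_comp]

@[simp] theorem freeA {D : Type u₂} [Category.{v₂} D] {T : Monad D} (X : D) :
    (T.free.obj X).A = T.obj X := rfl

@[simp] theorem freea {D : Type u₂} [Category.{v₂} D] {T : Monad D} (X : D) :
    (T.free.obj X).a = T.μ.app X := rfl

@[simp] theorem freemap {D : Type u₂} [Category.{v₂} D] {T : Monad D} {X Y : D} (f : X ⟶ Y) :
    (T.free.map f).f = T.map f := rfl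

theorem stepE (L : LiftedAction t bs ρ K) {p p' : K.Algebra} {q q' : t.Algebra}
    (u : p ⟶ p') (v : q ⟶ q') {Z : M} (w : Z ⟶ ρ.smul p.A q.A)
    (e₁ : ρ.smul p.A q.A = (L.act p q).A) (e₂ : (L.act p q).A = ρ.smul p.A q.A)
    (e₁' : ρ.smul p'.A q'.A = (L.act p' q').A) (e₂' : (L.act p' q').A = ρ.smul p'.A q'.A) :
    K.map (w ≫ eqToHom e₁) ≫ (L.act p q).a ≫ eqToHom e₂ ≫ ρ.smulHom u.f v.f =
      K.map (w ≫ ρ.smulHom u.f v.f ≫ eqToHom e₁') ≫ (L.act p' q').a ≫ eqToHom e₂' :=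
  step L u v w

theorem tAlg_A (q q' : t.Algebra) : (tAlg t bs q q').A = q.A ⊗ q'.A := rfl

theorem sE (L : LiftedAction t bs ρ K) (p : K.Algebra) (q : t.Algebra) (X : M) (Y : C)
    (hX : p.A = X) (hY : q.A = Y) : ρ.smul X Y = (L.act p q).A := by
  subst hX hY; exact (L.strict_obj p q).symm

theorem strictF (L : LiftedAction t bs ρ K) (m : M) (x : C) :
    ρ.smul (K.obj m) (t.obj x) = (L.act (K.free.obj m) (t.free.obj x)).A :=
  (L.strict_obj (K.free.obj m) (t.free.obj x)).symm

/-- The coaction extracted from a lifted action. -/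
def δL (L : LiftedAction t bs ρ K) (m : M) (x : C) :
    K.obj (ρ.smul m x) ⟶ ρ.smul (K.obj m) (t.obj x) :=
  K.map (ρ.smulHom (K.η.app m) (t.η.app x) ≫
      eqToHom (strictF L m x).symm.symm) ≫
    (L.act (K.free.obj m) (t.free.obj x)).a ≫
    eqToHom (strictF L m x).symm

theorem δL_natural (L : LiftedAction t bs ρ K) {m m' : M} {x x' : C} (f : m ⟶ m') (g : x ⟶ x') :
    K.map (ρ.smulHom f g) ≫ δL L m' x' = δL L m x ≫ ρ.smulHom (K.map f) (t.map g) := by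
  have h := step L (K.free.map f) (t.free.map g) (ρ.smulHom (K.η.app m) (t.η.app x))
  simp only [freemap, freeA] at h
  have hn : f ≫ K.η.app m' = K.η.app m ≫ K.map f := by simpa using K.η.naturality f
  have hn' : g ≫ t.η.app x' = t.η.app x ≫ t.map g := by simpa using t.η.naturality g
  have hs : ρ.smulHom (K.η.app m) (t.η.app x) ≫ ρ.smulHom (K.map f) (t.map g) =
      ρ.smulHom f g ≫ ρ.smulHom (K.η.app m') (t.η.app x') := by
    rw [← ρ.smulHom_comp, ← ρ.smulHom_comp, hn, hn']
  dsimp only [δL]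
  simp only [Category.assoc]
  rw [h, ← Category.assoc (ρ.smulHom (K.η.app m) (t.η.app x)), hs, Category.assoc,
    Functor.map_comp]
  simp only [Functor.map_comp, Category.assoc]

theorem δL_unit_comod (L : LiftedAction t bs ρ K) (m : M) (x : C) :
    K.η.app (ρ.smul m x) ≫ δL L m x = ρ.smulHom (K.η.app m) (t.η.app x) := by
  dsimp only [δL]
  rw [← Category.assoc, ← K.η.naturality]
  simp [Monad.Algebra.unit_assoc]

/-- The multiplication as an algebra morphism between free algebras. -/
def muHom {D : Type u₂} [Category.{v₂} D] (T : Monad D) (X : D) :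
    T.free.obj (T.obj X) ⟶ T.free.obj X where
  f := T.μ.app X
  h := T.assoc X

@[simp] theorem muHom_f {D : Type u₂} [Category.{v₂} D] (T : Monad D) (X : D) :
    (muHom T X).f = T.μ.app X := rfl

theorem δL_mul_comod (L : LiftedAction t bs ρ K) (m : M) (x : C) :
    K.μ.app (ρ.smul m x) ≫ δL L m x =
      K.map (δL L m x) ≫ δL L (K.obj m) (t.obj x) ≫ ρ.smulHom (K.μ.app m) (t.μ.app x) := by
  have h := stepE L (muHom K m) (muHom t x) (ρ.smulHom (K.η.app (K.obj m)) (t.η.app (t.obj x)))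
    (sE L _ _ (K.obj (K.obj m)) (t.obj (t.obj x)) rfl rfl)
    (sE L _ _ (K.obj (K.obj m)) (t.obj (t.obj x)) rfl rfl).symm
    (sE L _ _ (K.obj m) (t.obj x) rfl rfl) (sE L _ _ (K.obj m) (t.obj x) rfl rfl).symm
  simp only [muHom_f, freeA] at h
  dsimp only [δL]
  simp only [Category.assoc]
  rw [h]
  rw [← Category.assoc (ρ.smulHom (K.η.app (K.obj m)) (t.η.app (t.obj x))), ← ρ.smulHom_comp,
    Monad.left_unit, Monad.left_unit, ρ.smulHom_id, Category.id_comp]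
  rw [← Category.assoc, ← K.μ.naturality]
  simp only [Category.assoc, Functor.comp_map]
  rw [Monad.Algebra.assoc_assoc]
  simp only [Functor.map_comp, eqToHom_map, Category.assoc, eqToHom_trans_assoc, eqToHom_refl,
    Category.id_comp]

/-- `δL` as an algebra morphism from a free algebra to an action of free algebras. -/
def gHom (L : LiftedAction t bs ρ K) (m : M) (x : C) :
    K.free.obj (ρ.smul m x) ⟶ L.act (K.free.obj m) (t.free.obj x) where
  f := δL L m x ≫ eqToHom (strictF L m x).symm.symm
  h := by
    dsimp only [δL, freea, freeA]
    simp only [Category.assoc, eqToHom_trans, eqToHom_refl, Category.comp_id]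
    rw [← Category.assoc, ← K.μ.naturality]
    simp only [Category.assoc, Functor.comp_map]
    rw [(L.act (K.free.obj m) (t.free.obj x)).assoc, ← Functor.map_comp_assoc]

@[simp] theorem gHom_f (L : LiftedAction t bs ρ K) (m : M) (x : C) :
    (gHom L m x).f = δL L m x ≫ eqToHom (strictF L m x).symm.symm := rfl

theorem δL_counital (L : LiftedAction t bs ρ K) (m : M) :
    δL L m (𝟙_ C) ≫ ρ.smulHom (𝟙 (K.obj m)) bs.op.e ≫ eqToHom (ρ.unit (K.obj m)) =
      K.map (eqToHom (ρ.unit m)) := by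
  have h := stepE L (𝟙 (K.free.obj m)) (eHom t bs) (ρ.smulHom (K.η.app m) (t.η.app (𝟙_ C)))
    (sE L _ _ (K.obj m) (t.obj (𝟙_ C)) rfl rfl) (sE L _ _ (K.obj m) (t.obj (𝟙_ C)) rfl rfl).symm
    (sE L _ _ (K.obj m) (𝟙_ C) rfl rfl) (sE L _ _ (K.obj m) (𝟙_ C) rfl rfl).symm
  simp only [Monad.Algebra.id_f, eHom_f, freeA] at h
  have u : L.act (K.free.obj m) (eAlg t bs) = K.free.obj m :=
    L.unit (K.free.obj m) bs.unit_counit bs.mul_counit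
  dsimp only [δL]
  simp only [Category.assoc]
  have h2 := congrArg (fun z => z ≫ eqToHom (ρ.unit (K.obj m))) h
  simp only [Category.assoc] at h2
  rw [h2]
  rw [← Category.assoc (ρ.smulHom (K.η.app m) (t.η.app (𝟙_ C))), ← ρ.smulHom_comp,
    Category.comp_id, bs.unit_counit, ρ.unit_hom]
  rw [algebra_a_eq u]
  simp only [freea, Functor.map_comp, eqToHom_map, Category.assoc, eqToHom_trans,
    eqToHom_trans_assoc, eqToHom_refl, Category.id_comp, Category.comp_id,
    Monad.right_unit_assoc, Monad.right_unit]
  have hA : (L.act (K.free.obj m) (eAlg t bs)).A = K.obj m := congrArg Monad.Algebra.A u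
  show eqToHom (congr_arg K.obj (ρ.unit m)) ≫ K.map (K.η.app m) ≫ 𝟙 _ ≫
      (K.μ.app m ≫ eqToHom hA.symm) ≫ eqToHom hA = eqToHom (congr_arg K.obj (ρ.unit m))
  simp

theorem δL_coassoc (L : LiftedAction t bs ρ K) (m : M) (x y : C) :
    δL L m (x ⊗ y) ≫ ρ.smulHom (𝟙 (K.obj m)) (bs.op.d x y) ≫
        eqToHom (ρ.assoc (K.obj m) (t.obj x) (t.obj y)) =
      K.map (eqToHom (ρ.assoc m x y)) ≫ δL L (ρ.smul m x) y ≫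
        ρ.smulHom (δL L m x) (𝟙 (t.obj y)) := by
  have hL := stepE L (𝟙 (K.free.obj m)) (dHom t bs x y)
      (ρ.smulHom (K.η.app m) (t.η.app (x ⊗ y)))
    (sE L _ _ (K.obj m) (t.obj (x ⊗ y)) rfl rfl) (sE L _ _ (K.obj m) (t.obj (x ⊗ y)) rfl rfl).symm
    (sE L _ _ (K.obj m) (t.obj x ⊗ t.obj y) rfl rfl)
    (sE L _ _ (K.obj m) (t.obj x ⊗ t.obj y) rfl rfl).symm
  simp only [Monad.Algebra.id_f, dHom_f, freeA, tAlg_A] at hL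
  have u : L.act (K.free.obj m) (tAlg t bs (t.free.obj x) (t.free.obj y)) =
      L.act (L.act (K.free.obj m) (t.free.obj x)) (t.free.obj y) :=
    L.assoc (K.free.obj m) (t.free.obj x) (t.free.obj y)
      (tAlg_unit t bs (t.free.obj x) (t.free.obj y))
      (tAlg_assoc t bs (t.free.obj x) (t.free.obj y))
  have h2 := congrArg (fun z => z ≫ eqToHom (ρ.assoc (K.obj m) (t.obj x) (t.obj y))) hL
  simp only [Category.assoc] at h2
  have hR := stepE L (gHom L m x) (𝟙 (t.free.obj y))
      (ρ.smulHom (K.η.app (ρ.smul m x)) (t.η.app y))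
    (sE L _ _ (K.obj (ρ.smul m x)) (t.obj y) rfl rfl)
    (sE L _ _ (K.obj (ρ.smul m x)) (t.obj y) rfl rfl).symm
    (sE L _ _ _ (t.obj y) rfl rfl) (sE L _ _ _ (t.obj y) rfl rfl).symm
  simp only [Monad.Algebra.id_f, gHom_f, freeA] at hR
  have hδ : δL L m x =
      ((δL L m x ≫ eqToHom (strictF L m x).symm.symm) ≫
        eqToHom (strictF L m x).symm) := by
    simp
  have hsm : ρ.smulHom (δL L m x) (𝟙 (t.obj y)) =
      ρ.smulHom (δL L m x ≫ eqToHom (strictF L m x).symm.symm)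
          (𝟙 (t.obj y)) ≫
        eqToHom (congrArg (fun z => ρ.smul z (t.obj y))
          (strictF L m x).symm) := by
    conv_lhs => rw [hδ, ← Category.comp_id (𝟙 (t.obj y))]
    rw [ρ.smulHom_comp, smulHom_eqToHom_id]
  have h2R := congrArg (fun z => z ≫ eqToHom (congrArg (fun z => ρ.smul z (t.obj y))
      (strictF L m x).symm)) hR
  simp only [Category.assoc] at h2R
  have hg : K.η.app (ρ.smul m x) ≫ δL L m x ≫
        eqToHom (strictF L m x).symm.symm =
      ρ.smulHom (K.η.app m) (t.η.app x) ≫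
        eqToHom (strictF L m x).symm.symm := by
    rw [← Category.assoc, δL_unit_comod]
  have hsp : ρ.smulHom (ρ.smulHom (K.η.app m) (t.η.app x) ≫
        eqToHom (strictF L m x).symm.symm) (t.η.app y) =
      ρ.smulHom (ρ.smulHom (K.η.app m) (t.η.app x)) (t.η.app y) ≫
        eqToHom (congrArg (fun z => ρ.smul z (t.obj y))
          (strictF L m x).symm.symm) := by
    conv_lhs => rw [← Category.comp_id (t.η.app y)]
    rw [ρ.smulHom_comp, smulHom_eqToHom_id]
  rw [hsm]
  generalize hD : δL L m x = D
  rw [hD] at h2R hg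
  dsimp only [δL]
  simp only [Category.assoc]
  rw [h2, h2R]
  rw [← Category.assoc (ρ.smulHom (K.η.app m) (t.η.app (x ⊗ y))), ← ρ.smulHom_comp,
    Category.comp_id, bs.unit_opmon, ρ.assoc_hom]
  rw [algebra_a_eq u]
  rw [← Category.assoc (ρ.smulHom (K.η.app (ρ.smul m x)) (t.η.app y)), ← ρ.smulHom_comp,
    Category.comp_id, hg, hsp]
  simp only [Functor.map_comp, eqToHom_map, Category.assoc, eqToHom_trans, eqToHom_trans_assoc,
    eqToHom_refl, Category.id_comp, Category.comp_id]

/-- The coaction associated with a lifted action. -/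
def bwd (L : LiftedAction t bs ρ K) : Coaction t bs ρ K where
  δ := δL L
  natural := δL_natural L
  coassoc := δL_coassoc L
  counital := δL_counital L
  mul_comod := δL_mul_comod L
  unit_comod := δL_unit_comod L

/-- The action of algebras induced by a coaction. -/
def fwdAct (co : Coaction t bs ρ K) (p : K.Algebra) (q : t.Algebra) : K.Algebra where
  A := ρ.smul p.A q.A
  a := co.δ p.A q.A ≫ ρ.smulHom p.a q.a
  unit := by
    rw [← Category.assoc, co.unit_comod, ← ρ.smulHom_comp, p.unit, q.unit]
    exact ρ.smulHom_id p.A q.A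
  assoc := by
    rw [← Category.assoc, co.mul_comod]
    simp only [Category.assoc]
    rw [← ρ.smulHom_comp, p.assoc, q.assoc, ρ.smulHom_comp,
      ← Category.assoc (co.δ (K.obj p.A) (t.obj q.A)), ← co.natural]
    simp only [Functor.map_comp, Category.assoc]

/-- The action of a coaction on algebra morphisms. -/
def fwdActHom (co : Coaction t bs ρ K) {p p' : K.Algebra} {q q' : t.Algebra}
    (u : p ⟶ p') (v : q ⟶ q') : fwdAct co p q ⟶ fwdAct co p' q' where
  f := ρ.smulHom u.f v.f
  h := by
    dsimp only [fwdAct]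
    rw [← Category.assoc, co.natural, Category.assoc, ← ρ.smulHom_comp, u.h, v.h,
      ρ.smulHom_comp]
    simp only [Category.assoc]

theorem fwd_assoc (co : Coaction t bs ρ K) (p : K.Algebra) (q q' : t.Algebra)
    (h₁ : t.η.app (q.A ⊗ q'.A) ≫ (bs.op.d q.A q'.A ≫ (q.a ⊗ₘ q'.a)) = 𝟙 (q.A ⊗ q'.A))
    (h₂ : t.μ.app (q.A ⊗ q'.A) ≫ (bs.op.d q.A q'.A ≫ (q.a ⊗ₘ q'.a)) =
      t.map (bs.op.d q.A q'.A ≫ (q.a ⊗ₘ q'.a)) ≫ (bs.op.d q.A q'.A ≫ (q.a ⊗ₘ q'.a))) :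
    fwdAct co p ⟨q.A ⊗ q'.A, bs.op.d q.A q'.A ≫ (q.a ⊗ₘ q'.a), h₁, h₂⟩ =
      fwdAct co (fwdAct co p q) q' := by
  apply algebra_ext (ρ.assoc p.A q.A q'.A)
  refine (conj_eqToHom_iff_heq _ _ (congrArg K.obj (ρ.assoc p.A q.A q'.A))
    (ρ.assoc p.A q.A q'.A)).mp ?_
  dsimp only [fwdAct]
  have hs : ρ.smulHom p.a (bs.op.d q.A q'.A ≫ (q.a ⊗ₘ q'.a)) =
      ρ.smulHom (𝟙 (K.obj p.A)) (bs.op.d q.A q'.A) ≫ ρ.smulHom p.a (q.a ⊗ₘ q'.a) := by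
    rw [← ρ.smulHom_comp, Category.id_comp]
  rw [hs, ρ.assoc_hom]
  have cc := congrArg (fun z => z ≫ (ρ.smulHom (ρ.smulHom p.a q.a) q'.a ≫
      eqToHom (ρ.assoc p.A q.A q'.A).symm)) (co.coassoc p.A q.A q'.A)
  simp only [Category.assoc] at cc
  rw [cc, ← Category.assoc (ρ.smulHom (co.δ p.A q.A) (𝟙 (t.obj q'.A))),
    ← ρ.smulHom_comp, Category.id_comp]
  simp only [eqToHom_map, Category.assoc]

theorem fwd_unit (co : Coaction t bs ρ K) (p : K.Algebra)
    (h₁ : t.η.app (𝟙_ C) ≫ bs.op.e = 𝟙 (𝟙_ C))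
    (h₂ : t.μ.app (𝟙_ C) ≫ bs.op.e = t.map bs.op.e ≫ bs.op.e) :
    fwdAct co p ⟨𝟙_ C, bs.op.e, h₁, h₂⟩ = p := by
  apply algebra_ext (ρ.unit p.A)
  refine (conj_eqToHom_iff_heq _ _ (congrArg K.obj (ρ.unit p.A)) (ρ.unit p.A)).mp ?_
  dsimp only [fwdAct]
  have hs : ρ.smulHom p.a bs.op.e =
      ρ.smulHom (𝟙 (K.obj p.A)) bs.op.e ≫ ρ.smulHom p.a (𝟙 (𝟙_ C)) := by
    rw [← ρ.smulHom_comp, Category.id_comp, Category.comp_id]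
  rw [hs, ρ.unit_hom]
  have cc := congrArg (fun z => z ≫ (p.a ≫ eqToHom (ρ.unit p.A).symm)) (co.counital p.A)
  simp only [Category.assoc] at cc
  rw [cc]
  simp only [eqToHom_map, Category.assoc]

/-- The lifted action induced by a coaction. -/
def fwd (co : Coaction t bs ρ K) : LiftedAction t bs ρ K where
  act := fwdAct co
  actHom := fwdActHom co
  actHom_id p q := by
    apply Monad.Algebra.Hom.ext' _ _ _ _
    exact ρ.smulHom_id p.A q.A
  actHom_comp f f' g g' := by
    apply Monad.Algebra.Hom.ext' _ _ _ _
    exact ρ.smulHom_comp f.f f'.f g.f g'.f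
  strict_obj _ _ := rfl
  strict_hom _ _ := HEq.rfl
  assoc := fwd_assoc co
  unit := fwd_unit co

theorem key (L : LiftedAction t bs ρ K) (p : K.Algebra) (q : t.Algebra) :
    δL L p.A q.A ≫ ρ.smulHom p.a q.a =
      eqToHom (congrArg K.obj (L.strict_obj p q)).symm ≫ (L.act p q).a ≫
        eqToHom (L.strict_obj p q) := by
  have h := step L (aHom p) (aHom q) (ρ.smulHom (K.η.app p.A) (t.η.app q.A))
  simp only [aHom_f, freeA] at h
  have hs : ρ.smulHom (K.η.app p.A) (t.η.app q.A) ≫ ρ.smulHom p.a q.a =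
      𝟙 (ρ.smul p.A q.A) := by
    rw [← ρ.smulHom_comp, p.unit, q.unit]
    exact ρ.smulHom_id p.A q.A
  dsimp only [δL]
  simp only [Category.assoc]
  rw [h, ← Category.assoc (ρ.smulHom (K.η.app p.A) (t.η.app q.A)), hs]
  simp [eqToHom_map]

theorem coaction_ext {c₁ c₂ : Coaction t bs ρ K} (h : ∀ m x, c₁.δ m x = c₂.δ m x) :
    c₁ = c₂ := by
  obtain ⟨δ₁, n₁, a₁, cu₁, mc₁, uc₁⟩ := c₁
  obtain ⟨δ₂, n₂, a₂, cu₂, mc₂, uc₂⟩ := c₂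
  have hδ : δ₁ = δ₂ := funext fun m => funext fun x => h m x
  subst hδ
  rfl

theorem liftedAction_ext {L₁ L₂ : LiftedAction t bs ρ K}
    (h : ∀ p q, L₁.act p q = L₂.act p q)
    (h' : ∀ {p p' : K.Algebra} {q q' : t.Algebra} (u : p ⟶ p') (v : q ⟶ q'),
      HEq (L₁.actHom u v) (L₂.actHom u v)) : L₁ = L₂ := by
  obtain ⟨act₁, ah₁, i₁, c₁, so₁, sh₁, as₁, un₁⟩ := L₁
  obtain ⟨act₂, ah₂, i₂, c₂, so₂, sh₂, as₂, un₂⟩ := L₂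
  have hact : act₁ = act₂ := funext fun p => funext fun q => h p q
  subst hact
  have hah : @ah₁ = @ah₂ := by
    funext p p' q q' u v
    exact eq_of_heq (h' u v)
  subst hah
  rfl

theorem act_eq (L : LiftedAction t bs ρ K) (p : K.Algebra) (q : t.Algebra) :
    fwdAct (bwd L) p q = L.act p q := by
  apply algebra_ext (L.strict_obj p q).symm
  refine (conj_eqToHom_iff_heq _ _ (congrArg K.obj (L.strict_obj p q)).symm
    (L.strict_obj p q).symm).mp ?_
  dsimp only [fwdAct, bwd]
  exact key L p q

theorem fwd_bwd (L : LiftedAction t bs ρ K) : fwd (bwd L) = L := by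
  apply liftedAction_ext (act_eq L)
  intro p p' q q' u v
  refine algebraHom_heq (act_eq L p q) (act_eq L p' q') ?_
  exact (L.strict_hom u v).symm

theorem fwd_inj : Function.Injective (fwd (t := t) (bs := bs) (ρ := ρ) (K := K)) := by
  intro c₁ c₂ h
  apply coaction_ext
  intro m x
  have h2 : ∀ (p : K.Algebra) (q : t.Algebra),
      c₁.δ p.A q.A ≫ ρ.smulHom p.a q.a = c₂.δ p.A q.A ≫ ρ.smulHom p.a q.a := by
    intro p q
    have h3 : fwdAct c₁ p q = fwdAct c₂ p q := by
      have h5 := congrArg (fun L : LiftedAction t bs ρ K => L.act p q) h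
      simpa [fwd] using h5
    have h4 : HEq (fwdAct c₁ p q).a (fwdAct c₂ p q).a := by rw [h3]
    exact eq_of_heq h4
  have e1 := h2 (K.free.obj m) (t.free.obj x)
  simp only [freeA, freea] at e1
  have rec1 : ∀ (c : Coaction t bs ρ K),
      c.δ m x = K.map (ρ.smulHom (K.η.app m) (t.η.app x)) ≫
        (c.δ (K.obj m) (t.obj x) ≫ ρ.smulHom (K.μ.app m) (t.μ.app x)) := by
    intro c
    have hid := ρ.smulHom_id (K.obj m) (t.obj x)
    rw [← Category.assoc, c.natural, Category.assoc, ← ρ.smulHom_comp,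
      Monad.right_unit, Monad.right_unit]
    simp [hid]
  rw [rec1 c₁, rec1 c₂, e1]

end

end Stmt16
/-- For a bimonad `(t, bs)` on `C` and a monad `K` on a right `C`-module category `M`,
coactions of the bimonad on `K` (making `K` a comodule monad) are in bijection with
right actions of `C^t` on `M^K` for which `U^K` is a strict comodule functor over the
strict monoidal forgetful functor `U^t`; the bijection sends a coaction `δ` to the action
`(m, θ_m) ◁ (x, θ_x) = (m ◁ x, (θ_m ◁ θ_x) ∘ δ_{m,x})`. -/
theorem stmt16 {C : Type u₁} [Category.{v₁} C] [MonoidalCategory C]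
    {M : Type u₁} [Category.{v₁} M]
    (t : Monad C) (bs : BimonadStr t) (ρ : RAct C M) (K : Monad M) :
    ∃ e : Coaction t bs ρ K ≃ LiftedAction t bs ρ K,
      ∀ (co : Coaction t bs ρ K) (p : K.Algebra) (q : t.Algebra),
        ((e co).act p q).A = ρ.smul p.A q.A ∧
        HEq ((e co).act p q).a (co.δ p.A q.A ≫ ρ.smulHom p.a q.a) := by
  refine ⟨Equiv.ofBijective Stmt16.fwd ⟨Stmt16.fwd_inj, fun L => ⟨Stmt16.bwd L, Stmt16.fwd_bwd L⟩⟩, ?_⟩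
  intro co p q
  exact ⟨rfl, HEq.rfl⟩
end

section
/- Let (φ : G ⟹ K, ψ : B ⟹ F) be a comodule natural transformation between comodule functors (G, δ^(G)) and (K, δ^(K)) over opmonoidal functors B and F respectively. Define a new coaction λ on G by λ_{m,x} = (Gm ◀ ψ_x) ∘ δ^(G)_{m,x}. Then λ is a coassociative and counital coaction of F on G, and φ : (G, λ) ⟹ (K, δ^(K)) is a morphism of comodule functors over F (i.e. a comodule natural transformation with second component id_F). -/
open CategoryTheory Category MonoidalCategory

universe v₁ v₂ u₁ u₂

/-- Let `(φ : G ⟹ K, ψ : B ⟹ F)` be a comodule natural transformation between comodule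
functors over opmonoidal functors `B` and `F`, with `ψ` opmonoidal.  Then
`λ_{m,x} = (Gm ◀ ψ_x) ∘ δ^G_{m,x}` is a natural, coassociative and counital coaction of
`F` on `G`, and `φ` is a morphism of comodule functors `(G, λ) ⟹ (K, δ^K)` over `F`. -/
theorem stmt17 {C : Type u₁} [Category.{v₁} C] [MonoidalCategory C]
    {D : Type u₂} [Category.{v₂} D] [MonoidalCategory D]
    {M : Type u₁} [Category.{v₁} M] {N : Type u₂} [Category.{v₂} N]
    (B F : C ⥤ D) (OB : OpmonStr B) (OF : OpmonStr F)
    (ρM : RAct C M) (ρN : RAct D N)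
    (G K : M ⥤ N)
    (cG : ComodStr B OB ρM ρN G) (cK : ComodStr F OF ρM ρN K)
    (φ : G ⟶ K) (ψ : B ⟶ F)
    (hψd : ∀ x y : C, ψ.app (x ⊗ y) ≫ OF.d x y = OB.d x y ≫ (ψ.app x ⊗ₘ ψ.app y))
    (hψe : ψ.app (𝟙_ C) ≫ OF.e = OB.e)
    (hcomod : ∀ (m : M) (x : C),
      φ.app (ρM.smul m x) ≫ cK.δ m x = cG.δ m x ≫ ρN.smulHom (φ.app m) (ψ.app x)) :
    let lam : ∀ (m : M) (x : C), G.obj (ρM.smul m x) ⟶ ρN.smul (G.obj m) (F.obj x) :=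
      fun m x => cG.δ m x ≫ ρN.smulHom (𝟙 (G.obj m)) (ψ.app x)
    (∀ {m m' : M} {x x' : C} (f : m ⟶ m') (g : x ⟶ x'),
      G.map (ρM.smulHom f g) ≫ lam m' x' = lam m x ≫ ρN.smulHom (G.map f) (F.map g)) ∧
    (∀ (m : M) (x y : C),
      lam m (x ⊗ y) ≫ ρN.smulHom (𝟙 (G.obj m)) (OF.d x y) ≫
          eqToHom (ρN.assoc (G.obj m) (F.obj x) (F.obj y)) =
        G.map (eqToHom (ρM.assoc m x y)) ≫ lam (ρM.smul m x) y ≫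
          ρN.smulHom (lam m x) (𝟙 (F.obj y))) ∧
    (∀ m : M,
      lam m (𝟙_ C) ≫ ρN.smulHom (𝟙 (G.obj m)) OF.e ≫ eqToHom (ρN.unit (G.obj m)) =
        G.map (eqToHom (ρM.unit m))) ∧
    (∀ (m : M) (x : C),
      φ.app (ρM.smul m x) ≫ cK.δ m x = lam m x ≫ ρN.smulHom (φ.app m) (𝟙 (F.obj x))) := by
  intro lam
  have merge : ∀ {n n' n'' : N} {x x' x'' : D} (f : n ⟶ n') (f' : n' ⟶ n'')
      (g : x ⟶ x') (g' : x' ⟶ x''),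
      ρN.smulHom f g ≫ ρN.smulHom f' g' = ρN.smulHom (f ≫ f') (g ≫ g') :=
    fun f f' g g' => (ρN.smulHom_comp f f' g g').symm
  refine ⟨?_, ?_, ?_, ?_⟩
  · intro m m' x x' f g
    simp only [lam]
    rw [← assoc, cG.natural, assoc, merge]
    conv_rhs => rw [assoc, merge]
    simp [ψ.naturality]
  · intro m x y
    simp only [lam]
    rw [assoc, ← assoc (ρN.smulHom _ _), merge, hψd, ρN.smulHom_comp, ρN.assoc_hom]
    simp only [assoc, eqToHom_trans, eqToHom_refl, comp_id]
    slice_lhs 1 3 => rw [cG.coassoc]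
    simp only [assoc, merge, id_comp, comp_id]
  · intro m
    simp only [lam]
    rw [assoc, ← assoc (ρN.smulHom _ _), merge, id_comp, hψe, cG.counital]
  · intro m x
    simp only [lam]
    rw [hcomod, assoc, merge, id_comp, comp_id]
end
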